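/- arXiv:1802.00612 — 5 statements merged into one kernel-verified Lean document; each statement's English description precedes it below -/
import Mathlib

section
/- For every x > 0 and every λ ≤ 0 one has E[exp(λ S(x))] = exp(−f(λ,x)), where f(λ,x) = ∫₀^∞ (1 − exp(α^{−1/α} λ (x+y)^{−1/α})) dy. -/
open MeasureTheory ProbabilityTheory Real Set Filter Finset
open scoped ENNReal NNReal

noncomputable def Gfun (α x : ℝ) : ℝ → ℝ := fun t => α ^ (-1/α) * (x + max t 0) ^ (-1/α)
noncomputable def Hfun (α x lam : ℝ) : ℝ → ℝ := fun t => Real.exp (lam * Gfun α x t)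
noncomputable def Phi (α x lam : ℝ) : ℝ → ℝ :=
  fun T => ∫ y in (0:ℝ)..T, (1 - Hfun α x lam y)
noncomputable def Cnull (α x lam : ℝ) : ℝ :=
  ∫ y in Set.Ioi (0:ℝ), (1 - Hfun α x lam y)
noncomputable def Ffun (α x lam : ℝ) : ℝ → ℝ := fun t => Real.exp (Phi α x lam t)

section A
variable {α x lam : ℝ}

lemma hexp_neg (hα : α ∈ Set.Ioo (0:ℝ) 1) : (-1/α) ≤ 0 := by
  have := hα.1; rw [neg_div]; exact neg_nonpos.mpr (by positivity)

lemma hG_pos (hα : α ∈ Set.Ioo (0:ℝ) 1) (hx : 0 < x) (t : ℝ) : 0 < Gfun α x t := by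
  have h1 : (0:ℝ) < x + max t 0 := by positivity
  exact mul_pos (Real.rpow_pos_of_pos hα.1 _) (Real.rpow_pos_of_pos h1 _)

lemma hG_anti (hα : α ∈ Set.Ioo (0:ℝ) 1) (hx : 0 < x) {a b : ℝ} (hab : a ≤ b) :
    Gfun α x b ≤ Gfun α x a := by
  have h0 := hα.1
  have h1 : (0:ℝ) < x + max a 0 := by positivity
  have h2 : x + max a 0 ≤ x + max b 0 := by
    have := max_le_max hab (le_refl (0:ℝ)); linarith
  exact mul_le_mul_of_nonneg_left
    (Real.rpow_le_rpow_of_nonpos h1 h2 (hexp_neg hα)) (Real.rpow_nonneg hα.1.le _)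

lemma hH_pos (t : ℝ) : 0 < Hfun α x lam t := Real.exp_pos _

lemma hH_le_one (hα : α ∈ Set.Ioo (0:ℝ) 1) (hx : 0 < x) (hlam : lam ≤ 0) (t : ℝ) :
    Hfun α x lam t ≤ 1 := by
  rw [Hfun, Real.exp_le_one_iff]
  exact mul_nonpos_of_nonpos_of_nonneg hlam (hG_pos hα hx t).le

lemma hG_cont (hα : α ∈ Set.Ioo (0:ℝ) 1) (hx : 0 < x) : Continuous (Gfun α x) := by
  apply continuous_const.mul
  have hb : Continuous fun t : ℝ => x + max t 0 :=
    continuous_const.add (continuous_id.max continuous_const)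
  apply hb.rpow_const
  intro t
  have hbt : (0:ℝ) < x + max t 0 := by have := hα.1; positivity
  exact Or.inl hbt.ne'

lemma hH_cont (hα : α ∈ Set.Ioo (0:ℝ) 1) (hx : 0 < x) : Continuous (Hfun α x lam) :=
  Real.continuous_exp.comp (continuous_const.mul (hG_cont hα hx))

lemma hG_int (hα : α ∈ Set.Ioo (0:ℝ) 1) (hx : 0 < x) :
    IntegrableOn (Gfun α x) (Set.Ioi (0:ℝ)) := by
  have hexp : (-1/α) < -1 := by
    rw [neg_div, neg_lt_neg_iff]
    exact (one_lt_div hα.1).mpr hα.2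
  have h1 : IntegrableOn (Gfun α x) (Set.Ioc (0:ℝ) 1) :=
    (((hG_cont hα hx).continuousOn).integrableOn_Icc (a := 0) (b := 1)).mono_set
      Set.Ioc_subset_Icc_self
  have h2 : IntegrableOn (Gfun α x) (Set.Ioi (1:ℝ)) := by
    have base : IntegrableOn (fun t : ℝ => α ^ (-1/α) * t ^ (-1/α)) (Set.Ioi (1:ℝ)) :=
      (integrableOn_Ioi_rpow_of_lt hexp one_pos).const_mul _
    apply base.mono' (((hG_cont hα hx).aestronglyMeasurable).restrict)
    filter_upwards [ae_restrict_mem measurableSet_Ioi] with t ht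
    rw [Real.norm_of_nonneg (hG_pos hα hx t).le]
    apply mul_le_mul_of_nonneg_left _ (Real.rpow_nonneg hα.1.le _)
    apply Real.rpow_le_rpow_of_nonpos (lt_trans zero_lt_one ht) _ (hexp_neg hα)
    have ht' : t ≤ max t 0 := le_max_left _ _
    linarith
  have : Set.Ioi (0:ℝ) = Set.Ioc 0 1 ∪ Set.Ioi 1 := (Set.Ioc_union_Ioi_eq_Ioi zero_le_one).symm
  rw [this]; exact h1.union h2

lemma h1H_int (hα : α ∈ Set.Ioo (0:ℝ) 1) (hx : 0 < x) (hlam : lam ≤ 0) :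
    IntegrableOn (fun y => 1 - Hfun α x lam y) (Set.Ioi (0:ℝ)) := by
  apply (((hG_int hα hx).const_mul (-lam))).mono'
    (((continuous_const.sub (hH_cont hα hx)).aestronglyMeasurable).restrict)
  filter_upwards with t
  rw [Real.norm_of_nonneg (by show (0:ℝ) ≤ 1 - Hfun α x lam t; linarith [hH_le_one hα hx hlam (lam := lam) t])]
  have h := Real.add_one_le_exp (lam * Gfun α x t)
  have h2 : 1 - Real.exp (lam * Gfun α x t) ≤ -(lam * Gfun α x t) := by linarith
  calc 1 - Hfun α x lam t ≤ -(lam * Gfun α x t) := h2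
    _ = -lam * Gfun α x t := by ring

lemma hC_nonneg (hα : α ∈ Set.Ioo (0:ℝ) 1) (hx : 0 < x) (hlam : lam ≤ 0) :
    0 ≤ Cnull α x lam := by
  apply setIntegral_nonneg measurableSet_Ioi
  intro t _; linarith [hH_le_one hα hx hlam (lam := lam) t]

lemma hPhi_deriv (hα : α ∈ Set.Ioo (0:ℝ) 1) (hx : 0 < x) (t : ℝ) :
    HasDerivAt (Phi α x lam) (1 - Hfun α x lam t) t := by
  have hc : Continuous fun y => 1 - Hfun α x lam y := continuous_const.sub (hH_cont hα hx)
  exact intervalIntegral.integral_hasDerivAt_right (hc.intervalIntegrable 0 t)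
    (hc.stronglyMeasurableAtFilter _ _) hc.continuousAt

lemma hPhi_le (hα : α ∈ Set.Ioo (0:ℝ) 1) (hx : 0 < x) (hlam : lam ≤ 0) (t : ℝ) :
    Phi α x lam t ≤ Cnull α x lam := by
  rcases le_or_gt t 0 with h | h
  · have h3 : Phi α x lam t ≤ 0 := by
      rw [Phi, ← neg_nonneg, ← intervalIntegral.integral_symm]
      apply intervalIntegral.integral_nonneg h
      intro u _; linarith [hH_le_one hα hx hlam (lam := lam) u]
    linarith [hC_nonneg hα hx hlam (x := x) (lam := lam)]
  · rw [Phi, intervalIntegral.integral_of_le h.le]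
    apply setIntegral_mono_set (h1H_int hα hx hlam)
    · filter_upwards with u
      have := hH_le_one hα hx hlam (lam := lam) u
      simp only [Pi.zero_apply]; linarith
    · exact HasSubset.Subset.eventuallyLE Set.Ioc_subset_Ioi_self

lemma hF_pos (t : ℝ) : 0 < Ffun α x lam t := Real.exp_pos _

lemma hF_le (hα : α ∈ Set.Ioo (0:ℝ) 1) (hx : 0 < x) (hlam : lam ≤ 0) (t : ℝ) :
    Ffun α x lam t ≤ Real.exp (Cnull α x lam) :=
  Real.exp_le_exp.mpr (hPhi_le hα hx hlam t)

lemma hPhi_tendsto (hα : α ∈ Set.Ioo (0:ℝ) 1) (hx : 0 < x) (hlam : lam ≤ 0) :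
    Tendsto (Phi α x lam) atTop (nhds (Cnull α x lam)) :=
  intervalIntegral_tendsto_integral_Ioi 0 (h1H_int hα hx hlam) tendsto_id

lemma keyA (hα : α ∈ Set.Ioo (0:ℝ) 1) (hx : 0 < x) (hlam : lam ≤ 0) (t : ℝ) :
    ∫ s in Set.Ioi (0:ℝ),
      Real.exp (-s) * (Hfun α x lam (t + s) * Ffun α x lam (t + s)) = Ffun α x lam t := by
  have hderiv : ∀ s : ℝ,
      HasDerivAt (fun s => -(Real.exp (-s) * Ffun α x lam (t + s)))
        (Real.exp (-s) * (Hfun α x lam (t + s) * Ffun α x lam (t + s))) s := by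
    intro s
    have hE : HasDerivAt (fun s : ℝ => Real.exp (-s)) (-Real.exp (-s)) s := by
      have := ((hasDerivAt_neg s).exp)
      simpa using this
    have hFd : HasDerivAt (Ffun α x lam)
        ((1 - Hfun α x lam (t + s)) * Ffun α x lam (t + s)) (t + s) := by
      have := (hPhi_deriv hα hx (lam := lam) (t + s)).exp
      show HasDerivAt (fun y => Real.exp (Phi α x lam y))
        ((1 - Hfun α x lam (t + s)) * Ffun α x lam (t + s)) (t + s)
      simpa [Ffun, mul_comm] using this
    have hin : HasDerivAt (fun s : ℝ => t + s) 1 s := by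
      simpa using (hasDerivAt_id s).const_add t
    have hFc : HasDerivAt (fun s => Ffun α x lam (t + s))
        ((1 - Hfun α x lam (t + s)) * Ffun α x lam (t + s)) s := by
      have := HasDerivAt.comp s hFd hin
      simpa [Function.comp_def] using this
    have := (hE.mul hFc).neg
    exact this.congr_deriv (by ring)
  have hpos : ∀ s ∈ Set.Ioi (0:ℝ),
      0 ≤ Real.exp (-s) * (Hfun α x lam (t + s) * Ffun α x lam (t + s)) := by
    intro s _
    have := hH_pos (α := α) (x := x) (lam := lam) (t + s)
    have := hF_pos (α := α) (x := x) (lam := lam) (t + s)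
    positivity
  have htend : Tendsto (fun s => -(Real.exp (-s) * Ffun α x lam (t + s))) atTop (nhds 0) := by
    rw [← neg_zero]
    apply Tendsto.neg
    have hb : Tendsto (fun s : ℝ => Real.exp (-s) * Real.exp (Cnull α x lam)) atTop (nhds 0) := by
      simpa using (Real.tendsto_exp_neg_atTop_nhds_zero).mul_const (Real.exp (Cnull α x lam))
    apply squeeze_zero (fun s => ?_) _ hb
    swap
    · have := hF_pos (α := α) (x := x) (lam := lam) (t+s)
      positivity
    intro s
    exact mul_le_mul_of_nonneg_left (hF_le hα hx hlam (t + s)) (Real.exp_nonneg _)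
  have := integral_Ioi_of_hasDerivAt_of_nonneg' (fun s _ => hderiv s) hpos htend
  rw [this]
  simp [Ffun]

end A

noncomputable def nuExp : Measure ℝ :=
  (volume.restrict (Set.Ioi (0:ℝ))).withDensity fun s => ENNReal.ofReal (Real.exp (-s))

lemma lint_exp_Ioi (b : ℝ) :
    ∫⁻ s in Set.Ioi b, ENNReal.ofReal (Real.exp (-s)) = ENNReal.ofReal (Real.exp (-b)) := by
  have hint : IntegrableOn (fun s : ℝ => Real.exp (-s)) (Set.Ioi b) := by
    have := exp_neg_integrableOn_Ioi b (b := 1) one_pos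
    simpa using this
  rw [← ofReal_integral_eq_lintegral_ofReal hint
    (by filter_upwards with s using Real.exp_nonneg _)]
  rw [integral_exp_neg_Ioi]

lemma nuExp_Ici (a : ℝ) :
    nuExp (Set.Ici a) = ENNReal.ofReal (Real.exp (-(max a 0))) := by
  rw [nuExp, withDensity_apply _ measurableSet_Ici, Measure.restrict_restrict measurableSet_Ici]
  rcases le_or_gt a 0 with h | h
  · have hset : Set.Ici a ∩ Set.Ioi 0 = Set.Ioi (0:ℝ) := by
      apply Set.inter_eq_self_of_subset_right
      intro s hs; exact le_trans h (le_of_lt hs)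
    rw [hset, lint_exp_Ioi, max_eq_right h]
  · have hset : Set.Ici a ∩ Set.Ioi 0 = Set.Ici a := by
      apply Set.inter_eq_self_of_subset_left
      intro s hs; exact lt_of_lt_of_le h hs
    rw [hset, max_eq_left h.le]
    rw [setLIntegral_congr (MeasureTheory.Ioi_ae_eq_Ici (a := a) (μ := volume)).symm]
    exact lint_exp_Ioi a

instance : IsProbabilityMeasure nuExp := by
  constructor
  have : (Set.univ : Set ℝ) ⊇ Set.Ici (0:ℝ) := Set.subset_univ _
  rw [nuExp, withDensity_apply _ MeasurableSet.univ, Measure.restrict_restrict MeasurableSet.univ]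
  rw [Set.univ_inter, lint_exp_Ioi]
  simp

section B
variable {Ω : Type*} [MeasurableSpace Ω] {μ : Measure Ω} [IsProbabilityMeasure μ]

lemma map_eq_nuExp {X : Ω → ℝ} (hX : Measurable X)
    (htail : ∀ u : ℝ, 0 ≤ u → μ {ω | u ≤ X ω} = ENNReal.ofReal (Real.exp (-u))) :
    μ.map X = nuExp := by
  have : IsProbabilityMeasure (μ.map X) := Measure.isProbabilityMeasure_map hX.aemeasurable
  apply MeasureTheory.Measure.ext_of_Ici
  intro a
  rw [Measure.map_apply hX measurableSet_Ici, nuExp_Ici]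
  have hpre : X ⁻¹' Set.Ici a = {ω | a ≤ X ω} := rfl
  rcases le_or_gt a 0 with h | h
  · rw [max_eq_right h, hpre]
    have h1 : μ {ω | (0:ℝ) ≤ X ω} = 1 := by
      rw [htail 0 le_rfl]; simp
    have hsub : {ω | (0:ℝ) ≤ X ω} ⊆ {ω | a ≤ X ω} := fun ω hω => le_trans h hω
    have : μ {ω | (0:ℝ) ≤ X ω} ≤ μ {ω | a ≤ X ω} := measure_mono hsub
    rw [h1] at this
    have h2 : μ {ω | a ≤ X ω} ≤ 1 :=
      (measure_mono (Set.subset_univ _)).trans_eq measure_univ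
    simp only [neg_zero, Real.exp_zero, ENNReal.ofReal_one]
    exact le_antisymm h2 this
  · rw [max_eq_left h.le, hpre, htail a h.le]

lemma integral_nuExp_eq {f : ℝ → ℝ} (hf : Measurable f) :
    ∫ s, f s ∂nuExp = ∫ s in Set.Ioi (0:ℝ), Real.exp (-s) * f s := by
  have : nuExp = (volume.restrict (Set.Ioi (0:ℝ))).withDensity
      fun s => ((Real.exp (-s)).toNNReal : ℝ≥0∞) := rfl
  rw [this, integral_withDensity_eq_integral_smul
    ((measurable_neg.exp).real_toNNReal : Measurable fun s => (Real.exp (-s)).toNNReal)]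
  apply setIntegral_congr_fun measurableSet_Ioi
  intro s _
  simp [NNReal.smul_def, Real.coe_toNNReal _ (Real.exp_nonneg _)]

lemma integral_comp_exp {X : Ω → ℝ} (hX : Measurable X)
    (htail : ∀ u : ℝ, 0 ≤ u → μ {ω | u ≤ X ω} = ENNReal.ofReal (Real.exp (-u)))
    {f : ℝ → ℝ} (hf : Measurable f) :
    ∫ ω, f (X ω) ∂μ = ∫ s in Set.Ioi (0:ℝ), Real.exp (-s) * f s := by
  rw [← integral_map hX.aemeasurable hf.aestronglyMeasurable, map_eq_nuExp hX htail,
    integral_nuExp_eq hf]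

lemma half_lemma : ∫ s in Set.Ioi (0:ℝ), Real.exp (-s) * Real.exp (-s) = 2⁻¹ := by
  have hderiv : ∀ s : ℝ, HasDerivAt (fun s : ℝ => -(Real.exp (-(2*s)) / 2))
      (Real.exp (-s) * Real.exp (-s)) s := by
    intro s
    have h1 : HasDerivAt (fun s : ℝ => -(2*s)) (-2) s := by
      exact (by simpa using ((hasDerivAt_id s).const_mul 2).neg : HasDerivAt (-fun y : ℝ => 2 * y) (-2) s)
    have h2 := (h1.exp.div_const 2).neg
    refine h2.congr_deriv ?_
    rw [← Real.exp_add]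
    ring_nf
  have hpos : ∀ s ∈ Set.Ioi (0:ℝ), 0 ≤ Real.exp (-s) * Real.exp (-s) := by
    intro s _; positivity
  have htend : Tendsto (fun s : ℝ => -(Real.exp (-(2*s)) / 2)) atTop (nhds 0) := by
    rw [← neg_zero]
    apply Tendsto.neg
    rw [show (0:ℝ) = 0 / 2 by norm_num]
    apply Tendsto.div_const
    have : Tendsto (fun s : ℝ => 2 * s) atTop atTop :=
      (tendsto_id.const_mul_atTop two_pos)
    exact Real.tendsto_exp_neg_atTop_nhds_zero.comp this
  have := integral_Ioi_of_hasDerivAt_of_nonneg' (fun s _ => hderiv s) hpos htend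
  rw [this]
  norm_num

end B

/-- Fix `α ∈ (0,1)`, let `(Γ k)` be i.i.d. standard exponentials with
arrival times `τ i = Γ 0 + ⋯ + Γ i`, and for `x > 0` set
`S x = ∑_{i} α^{-1/α} (x + τ i)^{-1/α}`. Then for every `x > 0` and every `λ ≤ 0`,
`E[exp (λ S x)] = exp (-f(λ,x))` where
`f(λ,x) = ∫₀^∞ (1 - exp (α^{-1/α} λ (x+y)^{-1/α})) dy`. -/
theorem mgf_of_conditioned_series
    {Ω : Type*} [MeasurableSpace Ω] (μ : Measure Ω) [IsProbabilityMeasure μ]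
    (α : ℝ) (hα : α ∈ Set.Ioo (0:ℝ) 1)
    (Γ : ℕ → Ω → ℝ) (hΓmeas : ∀ k, Measurable (Γ k))
    (hΓindep : iIndepFun Γ μ)
    (hΓtail : ∀ k, ∀ u : ℝ, 0 ≤ u → μ {ω | u ≤ Γ k ω} = ENNReal.ofReal (Real.exp (-u)))
    (τ : ℕ → Ω → ℝ) (hτ : ∀ i ω, τ i ω = ∑ k ∈ Finset.range (i + 1), Γ k ω)
    (S : ℝ → Ω → ℝ)
    (hS : ∀ x ω, S x ω = ∑' i : ℕ, α ^ (-1/α) * (x + τ i ω) ^ (-1/α)) :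
    ∀ x > (0:ℝ), ∀ lam ≤ (0:ℝ),
      ∫ ω, Real.exp (lam * S x ω) ∂μ
        = Real.exp (-(∫ y in Set.Ioi (0:ℝ),
            (1 - Real.exp (α ^ (-1/α) * lam * (x + y) ^ (-1/α))))) := by
  intro x hx lam hlam
  -- notation
  set B : ℝ := Real.exp (Cnull α x lam) with hB
  have hτmeas : ∀ i, Measurable (τ i) := by
    intro i
    have : τ i = fun ω => ∑ k ∈ Finset.range (i+1), Γ k ω := funext fun ω => hτ i ω
    rw [this]
    exact Finset.measurable_sum _ (fun k _ => hΓmeas k)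
  have hHmeas : Measurable (Hfun α x lam) := (hH_cont hα hx).measurable
  have hPhicont : Continuous (Phi α x lam) := by
    rw [continuous_iff_continuousAt]
    exact fun t => (hPhi_deriv hα hx (lam := lam) t).continuousAt
  have hFcont : Continuous (Ffun α x lam) := Real.continuous_exp.comp hPhicont
  have hFmeas : Measurable (Ffun α x lam) := hFcont.measurable
  set M : ℕ → Ω → ℝ :=
    fun n ω => (∏ j ∈ Finset.range (n+1), Hfun α x lam (τ j ω)) * Ffun α x lam (τ n ω) with hM
  have hMmeas : ∀ n, Measurable (M n) := by
    intro n
    exact (Finset.measurable_prod _ (fun j _ => hHmeas.comp (hτmeas j))).mul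
      (hFmeas.comp (hτmeas n))
  have hprod01 : ∀ n ω, 0 ≤ (∏ j ∈ Finset.range (n+1), Hfun α x lam (τ j ω)) ∧
      (∏ j ∈ Finset.range (n+1), Hfun α x lam (τ j ω)) ≤ 1 := by
    intro n ω
    constructor
    · exact Finset.prod_nonneg fun j _ => (hH_pos (τ j ω)).le
    · exact Finset.prod_le_one (fun j _ => (hH_pos (τ j ω)).le)
        (fun j _ => hH_le_one hα hx hlam (τ j ω))
  have hMbound : ∀ n ω, 0 ≤ M n ω ∧ M n ω ≤ B := by
    intro n ω
    obtain ⟨h1, h2⟩ := hprod01 n ω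
    constructor
    · exact mul_nonneg h1 (hF_pos _).le
    · calc M n ω ≤ 1 * Ffun α x lam (τ n ω) :=
            mul_le_mul_of_nonneg_right h2 (hF_pos _).le
        _ = Ffun α x lam (τ n ω) := one_mul _
        _ ≤ B := hF_le hα hx hlam _
  -- tuple independence
  have hVindep : ∀ n : ℕ, IndepFun
      (fun ω => fun i : ↥(Finset.range (n+1)) => Γ i ω) (Γ (n+1)) μ := by
    intro n
    have hdisj : Disjoint (Finset.range (n+1)) ({n+1} : Finset ℕ) := by simp
    have h := hΓindep.indepFun_finset (Finset.range (n+1)) {n+1} hdisj hΓmeas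
    have h2 := h.comp measurable_id
      (measurable_pi_apply (⟨n+1, Finset.mem_singleton_self _⟩ : ({n+1} : Finset ℕ)))
    exact h2
  -- E[M n] = 1
  have EM : ∀ n, ∫ ω, M n ω ∂μ = 1 := by
    intro n
    induction n with
    | zero =>
      have hpt : ∀ ω, M 0 ω = Hfun α x lam (Γ 0 ω) * Ffun α x lam (Γ 0 ω) := by
        intro ω
        rw [hM]
        simp only
        rw [Finset.prod_range_one, hτ 0 ω, Finset.sum_range_one]
      simp only [hpt]
      rw [integral_comp_exp (hΓmeas 0) (hΓtail 0) (f := fun s => Hfun α x lam s * Ffun α x lam s) (hHmeas.mul hFmeas)]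
      have hk := keyA hα hx hlam 0
      simp only [zero_add] at hk
      rw [hk]
      simp only [Ffun, Phi, intervalIntegral.integral_same, Real.exp_zero]
    | succ n ih =>
      classical
      set Pn : Ω → ℝ := fun ω => ∏ j ∈ Finset.range (n+1), Hfun α x lam (τ j ω) with hPn
      set Zn : Ω → ℝ × ℝ := fun ω => (Pn ω, τ n ω) with hZn
      have hPmeas : Measurable Pn :=
        Finset.measurable_prod _ (fun j _ => hHmeas.comp (hτmeas j))
      have hZmeas : Measurable Zn := hPmeas.prodMk (hτmeas n)
      haveI : IsProbabilityMeasure (μ.map Zn) := Measure.isProbabilityMeasure_map hZmeas.aemeasurable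
      set Ψ : (ℝ × ℝ) × ℝ → ℝ := fun w =>
        w.1.1 * (Hfun α x lam (w.1.2 + w.2) * Ffun α x lam (w.1.2 + w.2)) with hΨ
      have hΨmeas : Measurable Ψ :=
        (measurable_fst.fst.mul ((hHmeas.comp (measurable_fst.snd.add measurable_snd)).mul
          (hFmeas.comp (measurable_fst.snd.add measurable_snd))))
      -- express Zn as a function of the first n+1 coordinates
      set φ : (↥(Finset.range (n+1)) → ℝ) → ℝ × ℝ := fun v =>
        (∏ j ∈ Finset.range (n+1), Hfun α x lam
          (∑ k ∈ (Finset.range (j+1)).attach,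
            v ⟨min k.1 n, Finset.mem_range.mpr (by omega)⟩),
         ∑ j : ↥(Finset.range (n+1)), v j) with hφ
      have hφmeas : Measurable φ := by
        apply Measurable.prodMk
        · exact Finset.measurable_prod _ (fun j _ => hHmeas.comp
            (Finset.measurable_sum _ (fun k _ => measurable_pi_apply _)))
        · exact Finset.measurable_sum _ (fun k _ => measurable_pi_apply _)
      have hcomp : (φ ∘ fun ω => fun i : ↥(Finset.range (n+1)) => Γ i ω) = Zn := by
        funext ω
        simp only [Function.comp_apply, hφ, hZn, hPn]
        have hsnd : (∑ j : ↥(Finset.range (n+1)), Γ (↑j) ω) = τ n ω := by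
          rw [Finset.sum_coe_sort (Finset.range (n+1)) (fun k => Γ k ω), ← hτ n ω]
        have hfst : ∀ j ∈ Finset.range (n+1),
            (∑ k ∈ (Finset.range (j+1)).attach, Γ (min k.1 n) ω) = τ j ω := by
          intro j hj
          have hjn := Finset.mem_range.mp hj
          rw [hτ j ω, ← Finset.sum_attach (Finset.range (j+1)) (fun k => Γ k ω)]
          apply Finset.sum_congr rfl
          intro k _
          have hk1 := Finset.mem_range.mp k.2
          congr 1
          omega
        rw [hsnd]
        congr 1
        exact Finset.prod_congr rfl (fun j hj => by rw [hfst j hj])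
      have hindep : IndepFun Zn (Γ (n+1)) μ := by
        have h := (hVindep n).comp hφmeas measurable_id
        rw [hcomp] at h
        simpa [Function.id_comp] using h
      have hprodeq : μ.map (fun ω => (Zn ω, Γ (n+1) ω)) = (μ.map Zn).prod nuExp := by
        have h := (indepFun_iff_map_prod_eq_prod_map_map hZmeas.aemeasurable
          (hΓmeas (n+1)).aemeasurable).mp hindep
        rwa [map_eq_nuExp (hΓmeas (n+1)) (hΓtail (n+1))] at h
      have hMsplit : ∀ ω, M (n+1) ω = Ψ (Zn ω, Γ (n+1) ω) := by
        intro ω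
        rw [hM]
        simp only [hΨ, hZn, hPn]
        rw [Finset.prod_range_succ]
        have hτs : τ (n+1) ω = τ n ω + Γ (n+1) ω := by
          rw [hτ (n+1) ω, Finset.sum_range_succ _ (n+1), ← hτ n ω]
        rw [hτs]
        ring
      have hcompint : Integrable (fun ω => Ψ (Zn ω, Γ (n+1) ω)) μ := by
        apply Integrable.mono' (integrable_const B)
          (hΨmeas.comp (hZmeas.prodMk (hΓmeas (n+1)))).aestronglyMeasurable
        filter_upwards with ω
        simp only [Function.comp_apply]
        rw [← hMsplit ω, Real.norm_of_nonneg (hMbound (n+1) ω).1]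
        exact (hMbound (n+1) ω).2
      have hΨint : Integrable Ψ ((μ.map Zn).prod nuExp) := by
        rw [← hprodeq,
          integrable_map_measure hΨmeas.aestronglyMeasurable
            (hZmeas.prodMk (hΓmeas (n+1))).aemeasurable]
        exact hcompint
      calc ∫ ω, M (n+1) ω ∂μ = ∫ ω, Ψ (Zn ω, Γ (n+1) ω) ∂μ := by simp only [hMsplit]
        _ = ∫ w, Ψ w ∂(μ.map (fun ω => (Zn ω, Γ (n+1) ω))) :=
            (integral_map (hZmeas.prodMk (hΓmeas (n+1))).aemeasurable
              hΨmeas.aestronglyMeasurable).symm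
        _ = ∫ w, Ψ w ∂((μ.map Zn).prod nuExp) := by rw [hprodeq]
        _ = ∫ z, ∫ s, Ψ (z, s) ∂nuExp ∂(μ.map Zn) := integral_prod Ψ hΨint
        _ = ∫ z : ℝ × ℝ, z.1 * Ffun α x lam z.2 ∂(μ.map Zn) := by
            apply integral_congr_ae (ae_of_all _ ?_)
            intro z
            simp only [hΨ]
            rw [integral_const_mul,
              integral_nuExp_eq (f := fun s => Hfun α x lam (z.2 + s) * Ffun α x lam (z.2 + s))
                (((hHmeas.comp (measurable_const.add measurable_id)).mul
                  (hFmeas.comp (measurable_const.add measurable_id))) :),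
              keyA hα hx hlam z.2]
        _ = ∫ ω, Pn ω * Ffun α x lam (τ n ω) ∂μ := by
            rw [integral_map (f := fun z : ℝ × ℝ => z.1 * Ffun α x lam z.2) hZmeas.aemeasurable
              (((measurable_fst.mul (hFmeas.comp measurable_snd)) :
                Measurable fun z : ℝ × ℝ => z.1 * Ffun α x lam z.2).aestronglyMeasurable)]
        _ = 1 := ih
  -- a.e. nonnegativity
  have hΓae : ∀ᵐ ω ∂μ, ∀ k, 0 ≤ Γ k ω := by
    rw [ae_all_iff]
    intro k
    have h1 : μ {ω | 0 ≤ Γ k ω} = 1 := by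
      have := hΓtail k 0 le_rfl
      simpa using this
    have hmeas : MeasurableSet {ω | 0 ≤ Γ k ω} := measurableSet_le measurable_const (hΓmeas k)
    rw [ae_iff]
    have hcompl := measure_compl hmeas (measure_ne_top μ _)
    rw [h1, measure_univ, tsub_self] at hcompl
    convert hcompl using 2
    rfl
  -- a.e. summability
  have hG0 : ∀ t : ℝ, Gfun α x t ≤ Gfun α x 0 := by
    intro t
    rcases le_or_gt 0 t with h | h
    · exact hG_anti hα hx h
    · have : Gfun α x t = Gfun α x 0 := by
        simp only [Gfun, max_eq_right h.le, max_self]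
      exact this.le
  have hexpτ_int : ∀ i, Integrable (fun ω => Real.exp (-τ i ω)) μ := by
    intro i
    apply Integrable.mono' (integrable_const (1:ℝ))
      ((hτmeas i).neg.exp.aestronglyMeasurable)
    filter_upwards [hΓae] with ω h0
    have hτnn : 0 ≤ τ i ω := by
      rw [hτ]; exact Finset.sum_nonneg fun k _ => h0 k
    rw [Real.norm_of_nonneg (Real.exp_nonneg _), Real.exp_le_one_iff]
    show -τ i ω ≤ 0
    linarith
  have hexpG_half : ∀ k, ∫ ω, Real.exp (-Γ k ω) ∂μ = 2⁻¹ := by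
    intro k
    rw [integral_comp_exp (hΓmeas k) (hΓtail k) measurable_neg.exp, half_lemma]
  have hexpτ : ∀ i, ∫ ω, Real.exp (-τ i ω) ∂μ = (2⁻¹ : ℝ)^(i+1) := by
    intro i
    induction i with
    | zero =>
      have h0 : (fun ω => Real.exp (-τ 0 ω)) = fun ω => Real.exp (-Γ 0 ω) := by
        funext ω; rw [hτ]; simp
      rw [h0, hexpG_half 0, pow_one]
    | succ i ih =>
      have hsplit : (fun ω => Real.exp (-τ (i+1) ω))
          = fun ω => Real.exp (-τ i ω) * Real.exp (-Γ (i+1) ω) := by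
        funext ω
        rw [← Real.exp_add, hτ (i+1) ω, Finset.sum_range_succ, ← hτ i ω]
        ring_nf
      have hindepi : IndepFun (fun ω => Real.exp (-τ i ω)) (fun ω => Real.exp (-Γ (i+1) ω)) μ := by
        have hφ : Measurable fun v : ↥(Finset.range (i+1)) → ℝ => Real.exp (-(∑ j, v j)) :=
          ((Finset.measurable_sum Finset.univ (fun j _ => measurable_pi_apply j)).neg).exp
        have h2 := (hVindep i).comp hφ (measurable_neg.exp)
        have h3 : ((fun v : ↥(Finset.range (i+1)) → ℝ => Real.exp (-(∑ j, v j)))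
            ∘ (fun ω => fun j : ↥(Finset.range (i+1)) => Γ j ω))
            = fun ω => Real.exp (-τ i ω) := by
          funext ω
          simp only [Function.comp_apply]
          rw [Finset.sum_coe_sort (Finset.range (i+1)) (fun k => Γ k ω), ← hτ i ω]
        rwa [h3] at h2
      rw [hsplit, hindepi.integral_fun_mul_eq_mul_integral ((hτmeas i).neg.exp.aestronglyMeasurable)
        ((hΓmeas (i+1)).neg.exp.aestronglyMeasurable), ih, hexpG_half (i+1), pow_succ]
      ring
  have hτ_lint : ∀ i, ∫⁻ ω, ENNReal.ofReal (Real.exp (-τ i ω)) ∂μ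
      = ENNReal.ofReal ((2⁻¹ : ℝ)^(i+1)) := by
    intro i
    rw [← ofReal_integral_eq_lintegral_ofReal (hexpτ_int i)
      (ae_of_all _ fun ω => Real.exp_nonneg _), hexpτ i]
  have hmarkov : ∀ i : ℕ, μ {ω | τ i ω ≤ (i:ℝ)/2}
      ≤ ENNReal.ofReal (Real.exp ((i:ℝ)/2) * (2⁻¹:ℝ)^(i+1)) := by
    intro i
    have hsub : {ω | τ i ω ≤ (i:ℝ)/2}
        ⊆ {ω | ENNReal.ofReal (Real.exp (-((i:ℝ)/2))) ≤ ENNReal.ofReal (Real.exp (-τ i ω))} := by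
      intro ω hω
      exact ENNReal.ofReal_le_ofReal (Real.exp_le_exp.mpr (by simpa using hω))
    calc μ {ω | τ i ω ≤ (i:ℝ)/2} ≤ μ {ω | ENNReal.ofReal (Real.exp (-((i:ℝ)/2)))
          ≤ ENNReal.ofReal (Real.exp (-τ i ω))} := measure_mono hsub
      _ ≤ (∫⁻ ω, ENNReal.ofReal (Real.exp (-τ i ω)) ∂μ)
          / ENNReal.ofReal (Real.exp (-((i:ℝ)/2))) := by
          apply meas_ge_le_lintegral_div
          · exact ((hτmeas i).neg.exp.ennreal_ofReal).aemeasurable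
          · simp [Real.exp_pos]
          · exact ENNReal.ofReal_ne_top
      _ = ENNReal.ofReal (Real.exp ((i:ℝ)/2) * (2⁻¹:ℝ)^(i+1)) := by
          rw [hτ_lint i, ← ENNReal.ofReal_div_of_pos (Real.exp_pos _)]
          congr 1
          rw [Real.exp_neg]
          field_simp
  have hsummable : ∀ᵐ ω ∂μ, Summable fun i => Gfun α x (τ i ω) := by
    have hp : (-1/α : ℝ) < -1 := by
      rw [neg_div, neg_lt_neg_iff]
      exact (one_lt_div hα.1).mpr hα.2
    -- summable dominating sequences
    have hw1 : Summable fun i : ℕ => Gfun α x 0 * (Real.exp ((i:ℝ)/2) * (2⁻¹:ℝ)^(i+1)) := by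
      have hr : Summable fun i : ℕ => (Real.exp (2⁻¹) * 2⁻¹ : ℝ)^i := by
        apply summable_geometric_of_lt_one (by positivity)
        have he2 : Real.exp (2⁻¹) < 2 := by
          nlinarith [Real.exp_one_lt_d9, Real.exp_pos (2⁻¹:ℝ),
            (Real.exp_add (2⁻¹) (2⁻¹)).symm, Real.exp_pos (1:ℝ),
            show (2⁻¹:ℝ) + 2⁻¹ = 1 by norm_num]
        nlinarith [Real.exp_pos (2⁻¹:ℝ)]
      have heq : ∀ i : ℕ, Real.exp ((i:ℝ)/2) * (2⁻¹:ℝ)^(i+1)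
          = 2⁻¹ * (Real.exp (2⁻¹) * 2⁻¹)^i := by
        intro i
        rw [show ((i:ℝ)/2) = (i:ℕ) * (2⁻¹:ℝ) by push_cast; ring, Real.exp_nat_mul,
          pow_succ, mul_pow]
        ring
      have := (hr.mul_left 2⁻¹).mul_left (Gfun α x 0)
      apply this.congr
      intro i
      rw [heq i]
    have hw2 : Summable fun i : ℕ => Gfun α x ((i:ℝ)/2) := by
      rw [← summable_nat_add_iff 1]
      have hbase : Summable fun i : ℕ => ((i+1:ℝ))^(-1/α : ℝ) := by
        have := (summable_nat_add_iff (f := fun i : ℕ => ((i:ℝ))^(-1/α : ℝ)) 1).mpr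
          (Real.summable_nat_rpow.mpr hp)
        apply this.congr
        intro i
        push_cast
        ring_nf
      apply ((hbase.mul_left (α ^ (-1/α : ℝ) * (2⁻¹:ℝ) ^ (-1/α : ℝ))).of_nonneg_of_le
        (fun i => (hG_pos hα hx _).le))
      intro i
      push_cast
      have hi1 : (0:ℝ) < ((i:ℝ)+1)/2 := by positivity
      have h1 : Gfun α x (((i:ℕ)+1:ℝ)/2) ≤ α ^ (-1/α : ℝ) * ((((i:ℝ)+1))/2)^(-1/α : ℝ) := by
        rw [Gfun]
        apply mul_le_mul_of_nonneg_left _ (Real.rpow_nonneg hα.1.le _)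
        apply Real.rpow_le_rpow_of_nonpos hi1 _ (hexp_neg hα)
        rw [max_eq_left (by positivity)]
        push_cast
        linarith
      calc Gfun α x (((i:ℕ)+1:ℝ)/2) ≤ α ^ (-1/α : ℝ) * ((((i:ℝ)+1))/2)^(-1/α : ℝ) := h1
        _ = α ^ (-1/α : ℝ) * (2⁻¹:ℝ) ^ (-1/α : ℝ) * ((i+1:ℝ))^(-1/α : ℝ) := by
            rw [show (((i:ℝ)+1))/2 = ((i:ℝ)+1) * 2⁻¹ by ring,
              Real.mul_rpow (by positivity) (by norm_num)]
            ring
    -- lintegral bound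
    have hbound : ∀ i : ℕ, ∫⁻ ω, ENNReal.ofReal (Gfun α x (τ i ω)) ∂μ
        ≤ ENNReal.ofReal (Gfun α x 0 * (Real.exp ((i:ℝ)/2) * (2⁻¹:ℝ)^(i+1)))
          + ENNReal.ofReal (Gfun α x ((i:ℝ)/2)) := by
      intro i
      have hsetmeas : MeasurableSet {ω | τ i ω ≤ (i:ℝ)/2} :=
        measurableSet_le (hτmeas i) measurable_const
      have hpt : ∀ ω, ENNReal.ofReal (Gfun α x (τ i ω))
          ≤ Set.indicator {ω | τ i ω ≤ (i:ℝ)/2} (fun _ => ENNReal.ofReal (Gfun α x 0)) ω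
            + ENNReal.ofReal (Gfun α x ((i:ℝ)/2)) := by
        intro ω
        rcases le_or_gt (τ i ω) ((i:ℝ)/2) with h | h
        · rw [Set.indicator_of_mem (show ω ∈ {ω | τ i ω ≤ (i:ℝ)/2} from h)]
          exact le_add_right (ENNReal.ofReal_le_ofReal (hG0 _))
        · rw [Set.indicator_of_notMem
            (show ω ∉ {ω | τ i ω ≤ (i:ℝ)/2} by simpa using h.not_ge)]
          rw [zero_add]
          exact ENNReal.ofReal_le_ofReal (hG_anti hα hx h.le)
      calc ∫⁻ ω, ENNReal.ofReal (Gfun α x (τ i ω)) ∂μ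
          ≤ ∫⁻ ω, (Set.indicator {ω | τ i ω ≤ (i:ℝ)/2}
              (fun _ => ENNReal.ofReal (Gfun α x 0)) ω
            + ENNReal.ofReal (Gfun α x ((i:ℝ)/2))) ∂μ := lintegral_mono hpt
        _ = ENNReal.ofReal (Gfun α x 0) * μ {ω | τ i ω ≤ (i:ℝ)/2}
            + ENNReal.ofReal (Gfun α x ((i:ℝ)/2)) := by
            rw [lintegral_add_right _ measurable_const, lintegral_indicator_const hsetmeas,
              lintegral_const, measure_univ, mul_one]
        _ ≤ ENNReal.ofReal (Gfun α x 0) * ENNReal.ofReal (Real.exp ((i:ℝ)/2) * (2⁻¹:ℝ)^(i+1))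
            + ENNReal.ofReal (Gfun α x ((i:ℝ)/2)) := by
            exact add_le_add_left (mul_le_mul_right (hmarkov i) _) _
        _ = ENNReal.ofReal (Gfun α x 0 * (Real.exp ((i:ℝ)/2) * (2⁻¹:ℝ)^(i+1)))
            + ENNReal.ofReal (Gfun α x ((i:ℝ)/2)) := by
            rw [ENNReal.ofReal_mul (hG_pos hα hx 0).le]
    have htsum_fin : ∑' i : ℕ, ∫⁻ ω, ENNReal.ofReal (Gfun α x (τ i ω)) ∂μ ≠ ⊤ := by
      apply ne_top_of_le_ne_top _ (ENNReal.tsum_le_tsum hbound)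
      rw [ENNReal.tsum_add]
      apply ENNReal.add_ne_top.mpr
      constructor
      · rw [← ENNReal.ofReal_tsum_of_nonneg
          (fun i => mul_nonneg (hG_pos hα hx 0).le (by positivity)) hw1]
        exact ENNReal.ofReal_ne_top
      · rw [← ENNReal.ofReal_tsum_of_nonneg (fun i => (hG_pos hα hx _).le) hw2]
        exact ENNReal.ofReal_ne_top
    have hGτmeas : ∀ i : ℕ, Measurable fun ω => ENNReal.ofReal (Gfun α x (τ i ω)) :=
      fun i => (((hG_cont hα hx).measurable.comp (hτmeas i)).ennreal_ofReal :)
    have hlint := lintegral_tsum (μ := μ)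
      (f := fun i ω => ENNReal.ofReal (Gfun α x (τ i ω)))
      (fun i => (hGτmeas i).aemeasurable)
    have hfin : ∫⁻ ω, ∑' i, ENNReal.ofReal (Gfun α x (τ i ω)) ∂μ ≠ ⊤ := by
      rw [hlint]
      exact htsum_fin
    have hae := ae_lt_top (f := fun ω => ∑' i, ENNReal.ofReal (Gfun α x (τ i ω)))
      (Measurable.ennreal_tsum hGτmeas) hfin
    filter_upwards [hae] with ω hω
    have hsum := ENNReal.summable_toReal hω.ne
    apply hsum.congr
    intro i
    rw [ENNReal.toReal_ofReal (hG_pos hα hx _).le]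
  -- a.e. τ → ∞
  have hτtend : ∀ᵐ ω ∂μ, Tendsto (fun n => τ n ω) atTop atTop := by
    filter_upwards [hΓae, hsummable] with ω h0 hsum
    have hmono : Monotone fun n => τ n ω := by
      apply monotone_nat_of_le_succ
      intro n
      rw [hτ n ω, hτ (n+1) ω, Finset.sum_range_succ _ (n+1)]
      have := h0 (n+1)
      linarith
    apply tendsto_atTop_atTop_of_monotone hmono
    intro b
    by_contra hcon
    push_neg at hcon
    have hub : ∀ n, Gfun α x b < Gfun α x (τ n ω) + Gfun α x b ∧
        Gfun α x b ≤ Gfun α x (τ n ω) := by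
      intro n
      have h2 := hG_anti hα hx (hcon n).le
      exact ⟨by linarith [hG_pos hα hx (τ n ω)], h2⟩
    have htend0 := hsum.tendsto_atTop_zero
    have hev := htend0.eventually (eventually_lt_nhds (hG_pos hα hx b))
    rcases hev.exists with ⟨n, hn⟩
    exact absurd (hub n).2 (not_le.mpr hn)
  -- a.e. convergence of M n
  have hMtend : ∀ᵐ ω ∂μ, Tendsto (fun n => M n ω) atTop
      (nhds (Real.exp (lam * S x ω) * B)) := by
    filter_upwards [hΓae, hsummable, hτtend] with ω h0 hsum htt
    have hτnn : ∀ i, 0 ≤ τ i ω := by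
      intro i
      rw [hτ i ω]
      exact Finset.sum_nonneg fun k _ => h0 k
    have hSx : S x ω = ∑' i, Gfun α x (τ i ω) := by
      rw [hS]
      apply tsum_congr
      intro i
      simp only [Gfun, max_eq_left (hτnn i)]
    -- first factor
    have h1 : Tendsto (fun n => ∏ j ∈ Finset.range (n+1), Hfun α x lam (τ j ω)) atTop
        (nhds (Real.exp (lam * S x ω))) := by
      have hsum2 : Summable fun j => lam * Gfun α x (τ j ω) := hsum.mul_left lam
      have ht1 : Tendsto (fun n => ∑ j ∈ Finset.range n, lam * Gfun α x (τ j ω)) atTop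
          (nhds (lam * S x ω)) := by
        have := hsum2.hasSum.tendsto_sum_nat
        rwa [tsum_mul_left, ← hSx] at this
      have ht2 : Tendsto (fun n => ∑ j ∈ Finset.range (n+1), lam * Gfun α x (τ j ω)) atTop
          (nhds (lam * S x ω)) := ht1.comp (tendsto_add_atTop_nat 1)
      have ht3 := (Real.continuous_exp.continuousAt.tendsto).comp ht2
      apply ht3.congr
      intro n
      simp only [Function.comp_apply]
      rw [Real.exp_sum]
      simp only [Hfun]
    -- second factor
    have h2 : Tendsto (fun n => Ffun α x lam (τ n ω)) atTop (nhds B) := by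
      have := (Real.continuous_exp.continuousAt.tendsto).comp
        ((hPhi_tendsto hα hx hlam).comp htt)
      exact this
    exact h1.mul h2
  -- conclusion via dominated convergence
  have hlim := tendsto_integral_of_dominated_convergence (μ := μ)
    (F := fun n ω => M n ω) (f := fun ω => Real.exp (lam * S x ω) * B) (fun _ => B)
    (fun n => (hMmeas n).aestronglyMeasurable) (integrable_const B)
    (fun n => ae_of_all _ fun ω => by
      rw [Real.norm_of_nonneg (hMbound n ω).1]; exact (hMbound n ω).2)
    hMtend
  have hone : Tendsto (fun _ : ℕ => (1:ℝ)) atTop (nhds (∫ ω, Real.exp (lam * S x ω) * B ∂μ)) := by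
    have : (fun n : ℕ => ∫ ω, M n ω ∂μ) = fun _ : ℕ => (1:ℝ) := funext EM
    rwa [this] at hlim
  have hint1 : ∫ ω, Real.exp (lam * S x ω) * B ∂μ = 1 :=
    (tendsto_nhds_unique hone tendsto_const_nhds).symm.symm
  rw [integral_mul_const] at hint1
  have hC : (∫ y in Set.Ioi (0:ℝ),
      (1 - Real.exp (α ^ (-1/α) * lam * (x + y) ^ (-1/α)))) = Cnull α x lam := by
    apply setIntegral_congr_fun measurableSet_Ioi
    intro y hy
    have hy' : (0:ℝ) ≤ y := le_of_lt hy
    simp only [Hfun, Gfun, max_eq_left hy']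
    rw [show α ^ (-1/α) * lam * (x + y) ^ (-1/α)
        = lam * (α ^ (-1/α) * (x + y) ^ (-1/α)) by ring]
  rw [hC]
  have hBpos : 0 < B := Real.exp_pos _
  rw [Real.exp_neg, ← hB]
  field_simp at hint1 ⊢
  linarith [hint1]
end

section
/- For every y with 0 ≤ y ≤ 1/(2−α) one has P( X₁ ≥ y ) ≤ e^{1/4} · exp(−(1/2)(2−α) y²), and for every y with 0 ≤ y ≤ 2/(2−α) one has P( X₁ ≤ −y ) ≤ e^{4/3} · exp(−(1/2)(2−α) y²). -/
open MeasureTheory ProbabilityTheory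

lemma rpow_integral_Ioo_aux (r : ℝ) (hr : -1 < r) :
    ∫ x in Set.Ioo (0:ℝ) 1, x ^ r = 1/(r+1) := by
  rw [← MeasureTheory.integral_Ioc_eq_integral_Ioo,
    ← intervalIntegral.integral_of_le (zero_le_one (α := ℝ)), integral_rpow (Or.inl hr),
    Real.one_rpow, Real.zero_rpow (by linarith)]
  ring

lemma exp_neg_quad_aux (u : ℝ) (hu : 0 ≤ u) : Real.exp (-u) ≤ 1 - u + u^2/2 := by
  set f : ℝ → ℝ := fun v => v^2/2 - v + 1 - Real.exp (-v) with hf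
  have hder : ∀ v : ℝ, HasDerivAt f (v - 1 + Real.exp (-v)) v := by
    intro v
    have h1 : HasDerivAt (fun v : ℝ => Real.exp (-v)) (-Real.exp (-v)) v := by
      exact (hasDerivAt_neg v).exp.congr_deriv (by ring)
    have h2 : HasDerivAt (fun v : ℝ => v^2/2 - v + 1) (v - 1) v := by
      have := (((hasDerivAt_pow 2 v).div_const 2).sub (hasDerivAt_id v)).add_const 1
      exact this.congr_deriv (by norm_num)
    exact (h2.sub h1).congr_deriv (by ring)
  have hmono : MonotoneOn f (Set.Ici (0:ℝ)) := by
    apply monotoneOn_of_deriv_nonneg (convex_Ici 0)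
    · exact Continuous.continuousOn (by fun_prop)
    · intro v hv
      exact (hder v).differentiableAt.differentiableWithinAt
    · intro v hv
      rw [(hder v).deriv]
      have := Real.add_one_le_exp (-v)
      linarith
  have h0 : f 0 = 0 := by simp [hf]
  have := hmono (Set.self_mem_Ici) (Set.mem_Ici.2 hu) hu
  rw [h0] at this
  simp only [hf] at this
  linarith

lemma exp_cubic_aux (u : ℝ) (h0 : 0 ≤ u) (h1 : u ≤ 1) :
    Real.exp u - 1 - u ≤ u^2/2 + u^3/4 := by
  have h := Real.exp_bound' h0 h1 (n := 3) (by norm_num)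
  have hs : (∑ m ∈ Finset.range 3, u ^ m / m.factorial) = 1 + u + u^2/2 := by
    norm_num [Finset.sum_range_succ, Nat.factorial]
  have hfact : ((Nat.factorial 3 : ℕ) : ℝ) = 6 := by norm_num [Nat.factorial]
  rw [hs, hfact] at h
  have hu3 : 0 ≤ u^3 := pow_nonneg h0 3
  nlinarith

lemma int_bound_aux (α : ℝ) (hα : α ∈ Set.Ioo (1:ℝ) 2) {t a b : ℝ} (ha : 0 ≤ a) (hb : 0 ≤ b)
    (hpt : ∀ x ∈ Set.Ioo (0:ℝ) 1, Real.exp (t*x) - 1 - t*x ≤ a*x^2 + b*x^3) :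
    ∫ x in Set.Ioo (0:ℝ) 1, (Real.exp (t*x) - 1 - t*x) * x ^ (-α-1)
      ≤ a/(2-α) + b/(3-α) := by
  obtain ⟨hα1, hα2⟩ := hα
  have h1α : (-1:ℝ) < 1 - α := by linarith
  have h2α : (-1:ℝ) < 2 - α := by linarith
  have hg1 : IntegrableOn (fun x : ℝ => x ^ (1-α)) (Set.Ioo 0 1) :=
    (intervalIntegral.integrableOn_Ioo_rpow_iff zero_lt_one).2 h1α
  have hg2 : IntegrableOn (fun x : ℝ => x ^ (2-α)) (Set.Ioo 0 1) :=
    (intervalIntegral.integrableOn_Ioo_rpow_iff zero_lt_one).2 h2α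
  have hgint : IntegrableOn (fun x : ℝ => a * x^(1-α) + b * x^(2-α)) (Set.Ioo 0 1) :=
    (hg1.const_mul a).add (hg2.const_mul b)
  have hle : ∫ x in Set.Ioo (0:ℝ) 1, (Real.exp (t*x) - 1 - t*x) * x ^ (-α-1)
      ≤ ∫ x in Set.Ioo (0:ℝ) 1, (a * x^(1-α) + b * x^(2-α)) := by
    apply integral_mono_of_nonneg
    · refine (ae_restrict_mem measurableSet_Ioo).mono fun x hx => ?_
      have := Real.add_one_le_exp (t*x)
      exact mul_nonneg (by linarith) (Real.rpow_nonneg hx.1.le _)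
    · exact hgint
    · refine (ae_restrict_mem measurableSet_Ioo).mono fun x hx => ?_
      have hx0 : (0:ℝ) < x := hx.1
      have e2 : x^2 * x^(-α-1) = x^(1-α) := by
        rw [← Real.rpow_natCast x 2, ← Real.rpow_add hx0]
        norm_num
        congr 1
        ring
      have e3 : x^3 * x^(-α-1) = x^(2-α) := by
        rw [← Real.rpow_natCast x 3, ← Real.rpow_add hx0]
        norm_num
        congr 1
        ring
      calc (Real.exp (t*x) - 1 - t*x) * x ^ (-α-1)
          ≤ (a*x^2 + b*x^3) * x ^ (-α-1) :=
            mul_le_mul_of_nonneg_right (hpt x hx) (Real.rpow_nonneg hx0.le _)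
        _ = a * x^(1-α) + b * x^(2-α) := by
            rw [add_mul, mul_assoc, mul_assoc, e2, e3]
  refine hle.trans_eq ?_
  rw [integral_add (hg1.const_mul a) (hg2.const_mul b), integral_const_mul, integral_const_mul,
    rpow_integral_Ioo_aux _ h1α, rpow_integral_Ioo_aux _ h2α]
  have e1 : 1 - α + 1 = 2 - α := by ring
  have e2 : 2 - α + 1 = 3 - α := by ring
  rw [e1, e2]
  ring

/-- Fix `α ∈ (1,2)` and let `X₁` be a random variable with moment
generating function `E[exp(t X₁)] = exp(∫₀¹ (e^{tx} - 1 - tx) x^{-α-1} dx)`. Then for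
`0 ≤ y ≤ 1/(2-α)` one has `P(X₁ ≥ y) ≤ e^{1/4} e^{-(2-α)y²/2}` and for
`0 ≤ y ≤ 2/(2-α)` one has `P(X₁ ≤ -y) ≤ e^{4/3} e^{-(2-α)y²/2}`. -/
theorem gaussian_tail_small_jumps_totally_asymmetric
    {Ω : Type*} [MeasurableSpace Ω] (μ : Measure Ω) [IsProbabilityMeasure μ]
    (α : ℝ) (hα : α ∈ Set.Ioo (1:ℝ) 2)
    (X₁ : Ω → ℝ) (hXmeas : Measurable X₁)
    (hXint : ∀ t : ℝ, Integrable (fun ω => Real.exp (t * X₁ ω)) μ)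
    (hmgf : ∀ t : ℝ, ∫ ω, Real.exp (t * X₁ ω) ∂μ
      = Real.exp (∫ x in Set.Ioo (0:ℝ) 1, (Real.exp (t*x) - 1 - t*x) * x ^ (-α-1))) :
    (∀ y : ℝ, 0 ≤ y → y ≤ 1/(2-α) →
      (μ {ω | y ≤ X₁ ω}).toReal
        ≤ Real.exp (1/4) * Real.exp (-(1/2) * (2-α) * y^2))
    ∧ (∀ y : ℝ, 0 ≤ y → y ≤ 2/(2-α) →
      (μ {ω | X₁ ω ≤ -y}).toReal
        ≤ Real.exp (4/3) * Real.exp (-(1/2) * (2-α) * y^2)) := by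
  obtain ⟨hα1, hα2⟩ := hα
  have h2a : (0:ℝ) < 2 - α := by linarith
  have h3a : (1:ℝ) ≤ 3 - α := by linarith
  constructor
  · intro y hy0 hy1
    set t : ℝ := (2-α)*y with htdef
    have ht0 : 0 ≤ t := mul_nonneg h2a.le hy0
    have ht1 : t ≤ 1 := by
      calc t ≤ (2-α) * (1/(2-α)) := mul_le_mul_of_nonneg_left hy1 h2a.le
        _ = 1 := by field_simp
    have hmgfeq : mgf X₁ μ t = Real.exp (∫ x in Set.Ioo (0:ℝ) 1,
        (Real.exp (t*x) - 1 - t*x) * x ^ (-α-1)) := hmgf t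
    have hcher := measure_ge_le_exp_mul_mgf (X := X₁) (μ := μ) (t := t) y ht0 (hXint t)
    rw [hmgfeq, ← Real.exp_add] at hcher
    refine hcher.trans ?_
    rw [← Real.exp_add, Real.exp_le_exp]
    have hI : ∫ x in Set.Ioo (0:ℝ) 1, (Real.exp (t*x) - 1 - t*x) * x ^ (-α-1)
        ≤ (t^2/2)/(2-α) + (t^3/4)/(3-α) := by
      apply int_bound_aux α ⟨hα1, hα2⟩ (by positivity) (by positivity)
      intro x hx
      have hu0 : 0 ≤ t*x := mul_nonneg ht0 hx.1.le
      have hu1 : t*x ≤ 1 := mul_le_one₀ ht1 hx.1.le hx.2.le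
      have := exp_cubic_aux (t*x) hu0 hu1
      calc Real.exp (t*x) - 1 - t*x ≤ (t*x)^2/2 + (t*x)^3/4 := this
        _ = (t^2/2)*x^2 + (t^3/4)*x^3 := by ring
    have ht3 : t^3 ≤ 1 := pow_le_one₀ ht0 ht1
    have hIb : (t^3/4)/(3-α) ≤ 1/4 := by
      rw [div_le_div_iff₀ (by linarith) (by norm_num)]
      nlinarith
    have hty : t * y = (2-α) * y^2 := by rw [htdef]; ring
    have ht2 : t^2 = (2-α)^2 * y^2 := by rw [htdef]; ring
    have hIa : (t^2/2)/(2-α) = (1/2)*(2-α)*y^2 := by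
      rw [ht2]; field_simp
    nlinarith [hI]
  · intro y hy0 hy2
    set t : ℝ := -((2-α)*y) with htdef
    have ht0 : t ≤ 0 := by
      rw [htdef]
      simp only [neg_nonpos]
      exact mul_nonneg h2a.le hy0
    have hmgfeq : mgf X₁ μ t = Real.exp (∫ x in Set.Ioo (0:ℝ) 1,
        (Real.exp (t*x) - 1 - t*x) * x ^ (-α-1)) := hmgf t
    have hcher := measure_le_le_exp_mul_mgf (X := X₁) (μ := μ) (t := t) (-y) ht0 (hXint t)
    rw [hmgfeq, ← Real.exp_add] at hcher
    refine hcher.trans ?_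
    rw [← Real.exp_add, Real.exp_le_exp]
    have hI : ∫ x in Set.Ioo (0:ℝ) 1, (Real.exp (t*x) - 1 - t*x) * x ^ (-α-1)
        ≤ (t^2/2)/(2-α) + 0/(3-α) := by
      apply int_bound_aux α ⟨hα1, hα2⟩ (by positivity) le_rfl
      intro x hx
      have hu0 : 0 ≤ -(t*x) := by
        rw [neg_nonneg]
        exact mul_nonpos_of_nonpos_of_nonneg ht0 hx.1.le
      have := exp_neg_quad_aux (-(t*x)) hu0
      rw [neg_neg] at this
      calc Real.exp (t*x) - 1 - t*x ≤ (-(t*x))^2/2 - 0 := by nlinarith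
        _ ≤ (t^2/2)*x^2 + 0*x^3 := by nlinarith
    have ht2 : t^2 = (2-α)^2 * y^2 := by rw [htdef]; ring
    have hIa : (t^2/2)/(2-α) = (1/2)*(2-α)*y^2 := by
      rw [ht2]; field_simp
    rw [hIa] at hI
    have hI' : ∫ x in Set.Ioo (0:ℝ) 1, (Real.exp (t*x) - 1 - t*x) * x ^ (-α-1)
        ≤ (1/2)*(2-α)*y^2 := by simpa using hI
    have h5 : -t * -y = -((2-α)*y^2) := by rw [htdef]; ring
    rw [h5]
    linarith
end

section
/- For every y ∈ [2/√(2−α), 1/(2−α)] one has P( X₁ ≥ y/4 ) ≥ 10^{−2} · exp(−(2−α) y²), and for every y ∈ [2/√(2−α), 2/(2−α)] one has P( X₁ ≤ −y/24 ) ≥ 10^{−2} · exp(−(2−α) y²). -/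
open MeasureTheory ProbabilityTheory
open Real Set



-- e^u - 1 - u >= u^2/2 for u >= 0
lemma S1 {u : ℝ} (hu : 0 ≤ u) : u^2/2 ≤ Real.exp u - 1 - u := by
  have := Real.quadratic_le_exp_of_nonneg hu
  linarith

-- (1+u) e^{-u} >= 1 - u^2/2, u >= 0 (monotone aux)
lemma C2aux {u : ℝ} (hu : 0 ≤ u) : 1 - u^2/2 ≤ (1+u) * Real.exp (-u) := by
  have mono : MonotoneOn (fun x : ℝ => (1+x) * Real.exp (-x) + x^2/2) (Set.Ici 0) := by
    apply monotoneOn_of_deriv_nonneg (convex_Ici 0)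
    · exact Continuous.continuousOn (by continuity)
    · intro x hx
      exact DifferentiableAt.differentiableWithinAt (by fun_prop)
    · intro x hx
      rw [interior_Ici, Set.mem_Ioi] at hx
      have d1 : HasDerivAt (fun x : ℝ => -x) (-1) x := (hasDerivAt_id x).neg
      have d2 : HasDerivAt (fun x : ℝ => Real.exp (-x)) (Real.exp (-x) * (-1)) x := d1.exp
      have d3 : HasDerivAt (fun x : ℝ => 1 + x) 1 x := (hasDerivAt_id x).const_add 1
      have d4 := d3.mul d2
      have d5 : HasDerivAt (fun x : ℝ => x^2/2) x x := by
        simpa using (hasDerivAt_pow 2 x).div_const 2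
      have d6 := d4.add d5
      rw [show deriv (fun x : ℝ => (1 + x) * Real.exp (-x) + x^2/2) x = _ from d6.deriv]
      have h1 : Real.exp (-x) ≤ 1 := Real.exp_le_one_iff.mpr (by linarith)
      have h2 : 0 < Real.exp (-x) := Real.exp_pos _
      nlinarith [hx.le]
  have h := mono (Set.self_mem_Ici) (by exact hu : u ∈ Set.Ici 0) hu
  simp only [add_zero, zero_pow, Real.exp_zero, mul_one, one_mul] at h
  norm_num at h
  linarith

-- e^u - 1 - u <= u^2/2 e^u for u >= 0
lemma S6pos {u : ℝ} (hu : 0 ≤ u) : Real.exp u - 1 - u ≤ u^2/2 * Real.exp u := by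
  have h := C2aux hu
  have hem : Real.exp (-u) * Real.exp u = 1 := by rw [← Real.exp_add]; simp
  have hep : 0 < Real.exp u := Real.exp_pos u
  nlinarith


-- (1-v) e^v <= 1 - v^2/2 for v >= 0
lemma C1aux {v : ℝ} (hv : 0 ≤ v) : (1-v) * Real.exp v ≤ 1 - v^2/2 := by
  have anti : AntitoneOn (fun x : ℝ => (1-x) * Real.exp x + x^2/2) (Set.Ici 0) := by
    apply antitoneOn_of_deriv_nonpos (convex_Ici 0)
    · exact Continuous.continuousOn (by continuity)
    · intro x hx
      exact DifferentiableAt.differentiableWithinAt (by fun_prop)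
    · intro x hx
      rw [interior_Ici, Set.mem_Ioi] at hx
      have d3 : HasDerivAt (fun x : ℝ => 1 - x) (-1) x := ((hasDerivAt_id x).neg).const_add 1
      have d4 := d3.mul (Real.hasDerivAt_exp x)
      have d5 : HasDerivAt (fun x : ℝ => x^2/2) x x := by
        simpa using (hasDerivAt_pow 2 x).div_const 2
      have d6 := d4.add d5
      rw [show deriv (fun x : ℝ => (1 - x) * Real.exp x + x^2/2) x = _ from d6.deriv]
      have h1 : x + 1 ≤ Real.exp x := Real.add_one_le_exp x
      have h2 : 0 < Real.exp x := Real.exp_pos _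
      nlinarith
  have h := anti (Set.self_mem_Ici) (by exact hv : v ∈ Set.Ici 0) hv
  norm_num at h
  linarith

-- u^2/2 e^u <= e^u - 1 - u for u <= 0
lemma S3 {u : ℝ} (hu : u ≤ 0) : u^2/2 * Real.exp u ≤ Real.exp u - 1 - u := by
  have h := C1aux (by linarith : 0 ≤ -u)
  have hem : Real.exp (-u) * Real.exp u = 1 := by rw [← Real.exp_add]; simp
  have hep : 0 < Real.exp u := Real.exp_pos u
  nlinarith

-- e^u - 1 - u <= u^2/2 for u <= 0
lemma S4 {u : ℝ} (hu : u ≤ 0) : Real.exp u - 1 - u ≤ u^2/2 := by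
  have h := Real.quadratic_le_exp_of_nonneg (by linarith : 0 ≤ -u)
  have hem : Real.exp (-u) * Real.exp u = 1 := by rw [← Real.exp_add]; simp
  have hep : 0 < Real.exp u := Real.exp_pos u
  have hden : 0 < 1 + (-u) + (-u)^2/2 := by nlinarith
  -- exp u <= 1/(1 - u + u^2/2) <= 1 + u + u^2/2 ... directly:
  have hle : Real.exp u * (1 + (-u) + (-u)^2/2) ≤ 1 := by
    calc Real.exp u * (1 + (-u) + (-u)^2/2) ≤ Real.exp u * Real.exp (-u) := by
          apply mul_le_mul_of_nonneg_left h hep.le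
      _ = 1 := by rw [mul_comm]; exact hem
  nlinarith [sq_nonneg u, sq_nonneg (u*u)]

-- e^{-x} <= 1 - x + x^2 for x >= 0
lemma S5 {x : ℝ} (hx : 0 ≤ x) : Real.exp (-x) ≤ 1 - x + x^2 := by
  have h := S4 (by linarith : -x ≤ (0:ℝ))
  nlinarith

-- e^u - 1 - u <= u^2/2 + u^3/6 e^u for u >= 0
lemma S2 {u : ℝ} (hu : 0 ≤ u) :
    Real.exp u - 1 - u ≤ u^2/2 + u^3 * Real.exp u / 6 := by
  have mono : MonotoneOn
      (fun x : ℝ => x^2/2 + x^3 * Real.exp x / 6 + 1 + x - Real.exp x) (Set.Ici 0) := by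
    apply monotoneOn_of_deriv_nonneg (convex_Ici 0)
    · exact Continuous.continuousOn (by continuity)
    · intro x hx
      exact DifferentiableAt.differentiableWithinAt (by fun_prop)
    · intro x hx
      rw [interior_Ici, Set.mem_Ioi] at hx
      have d5 : HasDerivAt (fun x : ℝ => x^2/2) x x := by
        simpa using (hasDerivAt_pow 2 x).div_const 2
      have d7 : HasDerivAt (fun x : ℝ => x^3 * Real.exp x / 6)
          ((3 * x^2 * Real.exp x + x^3 * Real.exp x) / 6) x := by
        have := ((hasDerivAt_pow 3 x).mul (Real.hasDerivAt_exp x)).div_const 6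
        simpa using this
      have d8 : HasDerivAt (fun x : ℝ => x^2/2 + x^3 * Real.exp x / 6 + 1 + x - Real.exp x)
          (x + (3 * x^2 * Real.exp x + x^3 * Real.exp x) / 6 + 1 - Real.exp x) x := by
        have h := (((d5.add d7).add_const 1).add (hasDerivAt_id x)).sub (Real.hasDerivAt_exp x)
        exact h
      rw [d8.deriv]
      have h1 := S6pos hx.le
      have h2 : 0 < Real.exp x := Real.exp_pos _
      nlinarith [mul_nonneg (mul_nonneg (mul_nonneg hx.le hx.le) hx.le) h2.le]
  have h := mono (Set.self_mem_Ici) (by exact hu : u ∈ Set.Ici 0) hu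
  norm_num at h
  linarith

-- general bound for integrability: e^u - 1 - u <= u^2/2 e^{|u|}
lemma S6 (u : ℝ) : Real.exp u - 1 - u ≤ u^2/2 * Real.exp |u| := by
  rcases le_or_gt 0 u with h | h
  · rw [abs_of_nonneg h]; exact S6pos h
  · rw [abs_of_neg h]
    have := S4 h.le
    have h1 : (1:ℝ) ≤ Real.exp (-u) := Real.one_le_exp (by linarith)
    nlinarith [sq_nonneg u]

lemma Snonneg (u : ℝ) : 0 ≤ Real.exp u - 1 - u := by
  have := Real.add_one_le_exp u; linarith



lemma integrableOn_rpow01 {p : ℝ} (hp : -1 < p) :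
    IntegrableOn (fun x : ℝ => x ^ p) (Set.Ioo 0 1) := by
  have h := intervalIntegral.intervalIntegrable_rpow' (a := 0) (b := 1) hp
  rw [intervalIntegrable_iff, Set.uIoc_of_le zero_le_one] at h
  exact h.mono_set Set.Ioo_subset_Ioc_self

lemma integral_rpow01 {p : ℝ} (hp : -1 < p) :
    ∫ x in Set.Ioo (0:ℝ) 1, x ^ p = 1/(p+1) := by
  rw [← integral_Ioc_eq_integral_Ioo, ← intervalIntegral.integral_of_le zero_le_one,
    integral_rpow (Or.inl hp)]
  rw [Real.one_rpow, Real.zero_rpow (by linarith : p + 1 ≠ 0)]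
  ring



-- rpow split identities
lemma rpow_split2 {α x : ℝ} (hx : 0 < x) : x ^ (1-α) = x^2 * x ^ (-α-1) := by
  rw [← Real.rpow_natCast x 2, ← Real.rpow_add hx]
  congr 1; ring

lemma rpow_split3 {α x : ℝ} (hx : 0 < x) : x ^ (2-α) = x^3 * x ^ (-α-1) := by
  rw [← Real.rpow_natCast x 3, ← Real.rpow_add hx]
  congr 1; ring

lemma integrableOn_main (α t : ℝ) (hα1 : 1 < α) (hα2 : α < 2) :
    IntegrableOn (fun x => (Real.exp (t*x) - 1 - t*x) * x ^ (-α-1)) (Set.Ioo (0:ℝ) 1) := by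
  have hmeas : Measurable (fun x : ℝ => (Real.exp (t*x) - 1 - t*x) * x ^ (-α-1)) := by
    apply Measurable.mul
    · fun_prop
    · fun_prop

  apply Integrable.mono' (g := fun x : ℝ => (t^2/2 * Real.exp |t|) * x ^ (1-α))
    (((integrableOn_rpow01 (by linarith)).const_mul _))
    hmeas.aestronglyMeasurable.restrict
  filter_upwards [ae_restrict_mem measurableSet_Ioo] with x hx
  have hx0 : 0 < x := hx.1
  have hx1 : x < 1 := hx.2
  have hrp : 0 ≤ x ^ (-α-1) := Real.rpow_nonneg hx0.le _
  have hnn : 0 ≤ (Real.exp (t*x) - 1 - t*x) * x ^ (-α-1) :=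
    mul_nonneg (Snonneg _) hrp
  rw [Real.norm_eq_abs, abs_of_nonneg hnn]
  have hb : Real.exp (t*x) - 1 - t*x ≤ t^2/2 * Real.exp |t| * x^2 := by
    have h1 := S6 (t*x)
    have h2 : Real.exp |t*x| ≤ Real.exp |t| := by
      apply Real.exp_le_exp.2
      rw [abs_mul, abs_of_pos hx0]
      nlinarith [abs_nonneg t]
    have h3 : (t*x)^2/2 * Real.exp |t*x| ≤ t^2/2 * Real.exp |t| * x^2 := by
      have : (t*x)^2/2 = t^2/2 * x^2 := by ring
      rw [this]
      have := Real.exp_pos |t*x|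
      nlinarith [sq_nonneg t, sq_nonneg x, mul_nonneg (sq_nonneg t) (sq_nonneg x)]
    linarith
  calc (Real.exp (t*x) - 1 - t*x) * x ^ (-α-1)
      ≤ (t^2/2 * Real.exp |t| * x^2) * x ^ (-α-1) := mul_le_mul_of_nonneg_right hb hrp
    _ = t^2/2 * Real.exp |t| * x ^ (1-α) := by rw [rpow_split2 hx0]; ring



section Jbounds
variable {α t : ℝ} (hα1 : 1 < α) (hα2 : α < 2)

lemma Jlb_pos (hα1 : 1 < α) (hα2 : α < 2) (ht : 0 ≤ t) :
    t^2/(2*(2-α)) ≤ ∫ x in Set.Ioo (0:ℝ) 1, (Real.exp (t*x) - 1 - t*x) * x ^ (-α-1) := by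
  have key : (∫ x in Set.Ioo (0:ℝ) 1, t^2/2 * x ^ (1-α))
      ≤ ∫ x in Set.Ioo (0:ℝ) 1, (Real.exp (t*x) - 1 - t*x) * x ^ (-α-1) := by
    apply setIntegral_mono_on ((integrableOn_rpow01 (by linarith)).const_mul _)
      (integrableOn_main α t hα1 hα2) measurableSet_Ioo
    intro x hx
    have hrp : 0 ≤ x ^ (-α-1) := Real.rpow_nonneg hx.1.le _
    have h1 := S1 (mul_nonneg ht hx.1.le)
    calc t^2/2 * x ^ (1-α) = ((t*x)^2/2) * x ^ (-α-1) := by rw [rpow_split2 hx.1]; ring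
      _ ≤ (Real.exp (t*x) - 1 - t*x) * x ^ (-α-1) := mul_le_mul_of_nonneg_right h1 hrp
  rw [integral_const_mul, integral_rpow01 (by linarith)] at key
  have : t^2/2 * (1/(1-α+1)) = t^2/(2*(2-α)) := by
    field_simp; ring
  linarith [key, this.symm.le, this.le]

lemma Jub_pos (hα1 : 1 < α) (hα2 : α < 2) (ht : 0 ≤ t) :
    (∫ x in Set.Ioo (0:ℝ) 1, (Real.exp (t*x) - 1 - t*x) * x ^ (-α-1))
      ≤ t^2/(2*(2-α)) + t^3 * Real.exp t / 6 := by
  have key : (∫ x in Set.Ioo (0:ℝ) 1, (Real.exp (t*x) - 1 - t*x) * x ^ (-α-1))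
      ≤ ∫ x in Set.Ioo (0:ℝ) 1, (t^2/2 * x ^ (1-α) + (t^3 * Real.exp t / 6) * x ^ (2-α)) := by
    apply setIntegral_mono_on (integrableOn_main α t hα1 hα2)
      (((integrableOn_rpow01 (by linarith : (-1:ℝ) < 1-α)).const_mul _).add
        ((integrableOn_rpow01 (by linarith : (-1:ℝ) < 2-α)).const_mul _)) measurableSet_Ioo
    intro x hx
    have hrp : 0 ≤ x ^ (-α-1) := Real.rpow_nonneg hx.1.le _
    have hu0 : 0 ≤ t*x := mul_nonneg ht hx.1.le
    have h2 := S2 hu0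
    have hee : Real.exp (t*x) ≤ Real.exp t := Real.exp_le_exp.2 (by nlinarith [hx.2])
    have h3 : Real.exp (t*x) - 1 - t*x ≤ (t*x)^2/2 + (t*x)^3 * Real.exp t / 6 := by
      nlinarith [pow_nonneg hu0 3]
    calc (Real.exp (t*x) - 1 - t*x) * x ^ (-α-1)
        ≤ ((t*x)^2/2 + (t*x)^3 * Real.exp t / 6) * x ^ (-α-1) :=
          mul_le_mul_of_nonneg_right h3 hrp
      _ = t^2/2 * (x^2 * x ^ (-α-1)) + (t^3 * Real.exp t / 6) * (x^3 * x ^ (-α-1)) := by ring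
      _ = t^2/2 * x ^ (1-α) + (t^3 * Real.exp t / 6) * x ^ (2-α) := by
          rw [rpow_split2 hx.1, rpow_split3 hx.1]
  rw [integral_add ((integrableOn_rpow01 (by linarith : (-1:ℝ) < 1-α)).const_mul _)
    ((integrableOn_rpow01 (by linarith : (-1:ℝ) < 2-α)).const_mul _),
    integral_const_mul, integral_const_mul,
    integral_rpow01 (by linarith : (-1:ℝ) < 1-α),
    integral_rpow01 (by linarith : (-1:ℝ) < 2-α)] at key
  have e1 : t^2/2 * (1/(1-α+1)) = t^2/(2*(2-α)) := by field_simp; ring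
  have e2 : t^3 * Real.exp t / 6 * (1/(2-α+1)) ≤ t^3 * Real.exp t / 6 := by
    have h30 : 0 < 3 - α := by linarith
    have hnn : 0 ≤ t^3 * Real.exp t / 6 := by positivity
    have : 1/(2-α+1) ≤ 1 := by rw [div_le_one (by linarith)]; linarith
    nlinarith
  linarith [key, e1.le, e1.symm.le]

lemma Jlb_neg (hα1 : 1 < α) (hα2 : α < 2) (ht : t ≤ 0) :
    t^2/(2*(2-α)) * Real.exp t
      ≤ ∫ x in Set.Ioo (0:ℝ) 1, (Real.exp (t*x) - 1 - t*x) * x ^ (-α-1) := by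
  have key : (∫ x in Set.Ioo (0:ℝ) 1, (t^2/2 * Real.exp t) * x ^ (1-α))
      ≤ ∫ x in Set.Ioo (0:ℝ) 1, (Real.exp (t*x) - 1 - t*x) * x ^ (-α-1) := by
    apply setIntegral_mono_on ((integrableOn_rpow01 (by linarith)).const_mul _)
      (integrableOn_main α t hα1 hα2) measurableSet_Ioo
    intro x hx
    have hrp : 0 ≤ x ^ (-α-1) := Real.rpow_nonneg hx.1.le _
    have hu : t*x ≤ 0 := mul_nonpos_of_nonpos_of_nonneg ht hx.1.le
    have h1 := S3 hu
    have hee : Real.exp t ≤ Real.exp (t*x) := Real.exp_le_exp.2 (by nlinarith [hx.2])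
    have h2 : (t*x)^2/2 * Real.exp t ≤ Real.exp (t*x) - 1 - t*x := by
      nlinarith [sq_nonneg (t*x)]
    calc (t^2/2 * Real.exp t) * x ^ (1-α) = ((t*x)^2/2 * Real.exp t) * x ^ (-α-1) := by
          rw [rpow_split2 hx.1]; ring
      _ ≤ (Real.exp (t*x) - 1 - t*x) * x ^ (-α-1) := mul_le_mul_of_nonneg_right h2 hrp
  rw [integral_const_mul, integral_rpow01 (by linarith)] at key
  have e1 : t^2/2 * Real.exp t * (1/(1-α+1)) = t^2/(2*(2-α)) * Real.exp t := by
    field_simp; ring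
  linarith [key, e1.le, e1.symm.le]

lemma Jub_neg (hα1 : 1 < α) (hα2 : α < 2) (ht : t ≤ 0) :
    (∫ x in Set.Ioo (0:ℝ) 1, (Real.exp (t*x) - 1 - t*x) * x ^ (-α-1))
      ≤ t^2/(2*(2-α)) := by
  have key : (∫ x in Set.Ioo (0:ℝ) 1, (Real.exp (t*x) - 1 - t*x) * x ^ (-α-1))
      ≤ ∫ x in Set.Ioo (0:ℝ) 1, t^2/2 * x ^ (1-α) := by
    apply setIntegral_mono_on (integrableOn_main α t hα1 hα2)
      ((integrableOn_rpow01 (by linarith)).const_mul _) measurableSet_Ioo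
    intro x hx
    have hrp : 0 ≤ x ^ (-α-1) := Real.rpow_nonneg hx.1.le _
    have hu : t*x ≤ 0 := mul_nonpos_of_nonpos_of_nonneg ht hx.1.le
    have h1 := S4 hu
    calc (Real.exp (t*x) - 1 - t*x) * x ^ (-α-1) ≤ ((t*x)^2/2) * x ^ (-α-1) :=
          mul_le_mul_of_nonneg_right h1 hrp
      _ = t^2/2 * x ^ (1-α) := by rw [rpow_split2 hx.1]; ring
  rw [integral_const_mul, integral_rpow01 (by linarith)] at key
  have e1 : t^2/2 * (1/(1-α+1)) = t^2/(2*(2-α)) := by field_simp; ring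
  linarith [key, e1.le, e1.symm.le]

end Jbounds



lemma pz {Ω : Type*} [MeasurableSpace Ω] (μ : MeasureTheory.Measure Ω)
    [IsProbabilityMeasure μ]
    (X : Ω → ℝ) (t a ℓ u : ℝ)
    (h1 : Integrable (fun ω => Real.exp (t * X ω)) μ)
    (h2 : Integrable (fun ω => Real.exp (2*t * X ω)) μ)
    (hMl : Real.exp ℓ ≤ ∫ ω, Real.exp (t * X ω) ∂μ)
    (hMu : ∫ ω, Real.exp (2*t * X ω) ∂μ ≤ Real.exp u)
    (hc : t * a ≤ ℓ)
    (A : Set Ω) (hAm : MeasurableSet A)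
    (hA : ∀ ω, ω ∉ A → t * X ω ≤ t * a) :
    (1 - Real.exp (t*a - ℓ))^2 * Real.exp (2*ℓ - u) ≤ (μ A).toReal := by
  set w : ℝ := 1 - Real.exp (t*a - ℓ) with hw_def
  have hw0 : 0 ≤ w := by
    have : Real.exp (t*a - ℓ) ≤ 1 := Real.exp_le_one_iff.mpr (by linarith)
    simp only [hw_def]; linarith
  rcases eq_or_lt_of_le hw0 with hw | hw
  · rw [← hw]
    simpa using ENNReal.toReal_nonneg
  set ε : ℝ := w * Real.exp (ℓ - u) with hε_def
  have hε : 0 < ε := by positivity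
  set p : ℝ := (μ A).toReal with hp_def
  -- complement bound
  have hcompl : ∫ ω in Aᶜ, Real.exp (t * X ω) ∂μ ≤ Real.exp (t*a) := by
    have step1 : ∫ ω in Aᶜ, Real.exp (t * X ω) ∂μ ≤ ∫ _ω in Aᶜ, Real.exp (t*a) ∂μ := by
      apply setIntegral_mono_on h1.integrableOn (integrable_const _).integrableOn hAm.compl
      intro ω hω
      exact Real.exp_le_exp.2 (hA ω hω)
    have step2 : ∫ _ω in Aᶜ, Real.exp (t*a) ∂μ = (μ Aᶜ).toReal * Real.exp (t*a) := by
      rw [setIntegral_const]; rfl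
    have step3 : (μ Aᶜ).toReal ≤ 1 := by
      have h := prob_le_one (μ := μ) (s := Aᶜ)
      have := ENNReal.toReal_mono (by simp) h
      simpa using this
    have := Real.exp_pos (t*a)
    nlinarith [step1, step2.le, step2.symm.le]
  have hsplit : (∫ ω in A, Real.exp (t * X ω) ∂μ) + ∫ ω in Aᶜ, Real.exp (t * X ω) ∂μ
      = ∫ ω, Real.exp (t * X ω) ∂μ := integral_add_compl hAm h1
  have hAint : Real.exp ℓ - Real.exp (t*a) ≤ ∫ ω in A, Real.exp (t * X ω) ∂μ := by
    linarith
  -- pointwise AM-GM bound on A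
  have hptwise : ∫ ω in A, Real.exp (t * X ω) ∂μ
      ≤ (ε/2) * (∫ ω in A, Real.exp (2*t * X ω) ∂μ) + p * (1/(2*ε)) := by
    have hmono : ∫ ω in A, Real.exp (t * X ω) ∂μ
        ≤ ∫ ω in A, ((ε/2) * Real.exp (2*t * X ω) + 1/(2*ε)) ∂μ := by
      apply setIntegral_mono_on h1.integrableOn
        ((h2.integrableOn.const_mul _).add (integrable_const _).integrableOn) hAm
      intro ω _
      simp only [Pi.add_apply]
      have hexp2 : Real.exp (2*t * X ω) = (Real.exp (t * X ω))^2 := by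
        rw [sq, ← Real.exp_add]; ring_nf
      have h0 := Real.exp_pos (t * X ω)
      have hsq := sq_nonneg (ε * Real.exp (t * X ω) - 1)
      rw [hexp2]
      have hε2 : 0 < 2*ε := by linarith
      have key : 0 ≤ (ε * Real.exp (t * X ω) - 1)^2 / (2*ε) := by positivity
      have expand : (ε/2) * (Real.exp (t * X ω))^2 + 1/(2*ε) - Real.exp (t * X ω)
          = (ε * Real.exp (t * X ω) - 1)^2 / (2*ε) := by
        field_simp
        ring
      linarith [expand.symm.le, expand.le, key]
    have hadd : ∫ ω in A, ((ε/2) * Real.exp (2*t * X ω) + 1/(2*ε)) ∂μ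
        = (ε/2) * (∫ ω in A, Real.exp (2*t * X ω) ∂μ) + (μ A).toReal * (1/(2*ε)) := by
      rw [integral_add (h2.integrableOn.const_mul _) (integrable_const _).integrableOn,
        integral_const_mul, setIntegral_const]
      rfl
    rw [hadd] at hmono
    exact hmono
  have hE : ∫ ω in A, Real.exp (2*t * X ω) ∂μ ≤ Real.exp u := by
    refine le_trans (setIntegral_le_integral h2 ?_) hMu
    filter_upwards with ω
    exact (Real.exp_pos _).le
  -- combine
  have hεe : (ε/2) * Real.exp u = (w/2) * Real.exp ℓ := by
    have h : Real.exp (ℓ-u) * Real.exp u = Real.exp ℓ := by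
      rw [← Real.exp_add]; congr 1; ring
    rw [hε_def]
    linear_combination (w/2) * h
  have hta : Real.exp (t*a) = Real.exp ℓ * Real.exp (t*a - ℓ) := by
    rw [← Real.exp_add]; congr 1; ring
  have hel : 0 < Real.exp ℓ := Real.exp_pos _
  have hcombine : w * Real.exp ℓ ≤ (w/2) * Real.exp ℓ + p * (1/(2*ε)) := by
    have e1 : Real.exp ℓ - Real.exp (t*a) = w * Real.exp ℓ := by
      rw [hta, hw_def]; ring
    have step : w * Real.exp ℓ ≤ (ε/2) * (∫ ω in A, Real.exp (2*t * X ω) ∂μ) + p * (1/(2*ε)) := by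
      rw [← e1]
      linarith
    have step2 : (ε/2) * (∫ ω in A, Real.exp (2*t * X ω) ∂μ) ≤ (ε/2) * Real.exp u := by
      apply mul_le_mul_of_nonneg_left hE (by linarith)
    linarith [hεe.le, hεe.symm.le]
  -- p >= ε w exp ℓ = w^2 exp(2ℓ - u)
  have hfinal : ε * w * Real.exp ℓ ≤ p := by
    have h : (w/2) * Real.exp ℓ ≤ p * (1/(2*ε)) := by linarith
    have h2ε : 0 < 2*ε := by linarith
    calc ε * w * Real.exp ℓ = (2*ε) * ((w/2) * Real.exp ℓ) := by ring
      _ ≤ (2*ε) * (p * (1/(2*ε))) := by apply mul_le_mul_of_nonneg_left h h2ε.le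
      _ = p := by field_simp
  calc w^2 * Real.exp (2*ℓ - u) = ε * w * Real.exp ℓ := by
        rw [hε_def]
        rw [show (2*ℓ - u) = (ℓ - u) + ℓ by ring, Real.exp_add]
        ring
    _ ≤ p := hfinal



lemma exp54 : Real.exp (5/4) ≤ 7/2 := by
  have h1 : Real.exp 1 < 2.7182818286 := Real.exp_one_lt_d9
  have h4 : Real.exp (5/4) ^ 4 = Real.exp 1 ^ 5 := by
    rw [← Real.exp_nat_mul, ← Real.exp_nat_mul]
    norm_num
  have h5 : Real.exp 1 ^ 5 < 2.7182818286 ^ 5 :=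
    pow_lt_pow_left₀ h1 (Real.exp_pos 1).le (by norm_num)
  have h6 : (2.7182818286:ℝ) ^ 5 < (7/2:ℝ)^4 := by norm_num
  have h7 : Real.exp (5/4) ^ 4 ≤ (7/2:ℝ)^4 := by
    rw [h4]; linarith
  exact le_of_pow_le_pow_left₀ (by norm_num) (by norm_num) h7

lemma expneg1 : (4/11 : ℝ) ≤ Real.exp (-1) := by
  have h1 : Real.exp 1 < 2.7182818286 := Real.exp_one_lt_d9
  have h0 : (0:ℝ) < Real.exp 1 := Real.exp_pos 1
  rw [Real.exp_neg, show (4:ℝ)/11 = ((11:ℝ)/4)⁻¹ by norm_num]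
  apply inv_anti₀ h0
  linarith

set_option maxHeartbeats 2000000 in
/-- Fix `α ∈ (1,2)` and let `X₁` be a random variable with moment
generating function `E[exp(t X₁)] = exp(∫₀¹ (e^{tx} - 1 - tx) x^{-α-1} dx)`. Then for
`y ∈ [2/√(2-α), 1/(2-α)]` one has `P(X₁ ≥ y/4) ≥ 10⁻² e^{-(2-α)y²}` and for
`y ∈ [2/√(2-α), 2/(2-α)]` one has `P(X₁ ≤ -y/24) ≥ 10⁻² e^{-(2-α)y²}`. -/
theorem gaussian_lower_tail_small_jumps_totally_asymmetric
    {Ω : Type*} [MeasurableSpace Ω] (μ : Measure Ω) [IsProbabilityMeasure μ]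
    (α : ℝ) (hα : α ∈ Set.Ioo (1:ℝ) 2)
    (X₁ : Ω → ℝ) (hXmeas : Measurable X₁)
    (hXint : ∀ t : ℝ, Integrable (fun ω => Real.exp (t * X₁ ω)) μ)
    (hmgf : ∀ t : ℝ, ∫ ω, Real.exp (t * X₁ ω) ∂μ
      = Real.exp (∫ x in Set.Ioo (0:ℝ) 1, (Real.exp (t*x) - 1 - t*x) * x ^ (-α-1))) :
    (∀ y ∈ Set.Icc (2 / Real.sqrt (2-α)) (1/(2-α)),
      (1/100) * Real.exp (-(2-α) * y^2) ≤ (μ {ω | y/4 ≤ X₁ ω}).toReal)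
    ∧ (∀ y ∈ Set.Icc (2 / Real.sqrt (2-α)) (2/(2-α)),
      (1/100) * Real.exp (-(2-α) * y^2) ≤ (μ {ω | X₁ ω ≤ -(y/24)}).toReal) := by
  obtain ⟨hα1, hα2⟩ := hα
  have hβ0 : 0 < 2 - α := by linarith
  have hs : 0 < Real.sqrt (2-α) := Real.sqrt_pos.2 hβ0
  have hsq : Real.sqrt (2-α)^2 = 2-α := Real.sq_sqrt hβ0.le
  constructor
  · -- Part 1: right tail
    intro y hy
    obtain ⟨hy1, hy2⟩ := hy
    have hy0 : 0 < y := lt_of_lt_of_le (by positivity) hy1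
    have h2y : 2 ≤ y * Real.sqrt (2-α) := (div_le_iff₀ hs).mp hy1
    set m : ℝ := (2-α) * y^2 with hm_def
    have hm : 4 ≤ m := by nlinarith
    have hm0 : (0:ℝ) ≤ m := by linarith
    have hby : (2-α) * y ≤ 1 := by
      have h := (le_div_iff₀ hβ0).mp hy2
      linarith
    have hby0 : 0 ≤ (2-α) * y := by positivity
    have hy4 : 4 ≤ y := by nlinarith
    have hβ4 : 2 - α ≤ 1/4 := by nlinarith
    set t : ℝ := (5/8) * ((2-α)*y) with ht_def
    have ht0 : 0 ≤ t := by positivity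
    set ℓ : ℝ := t^2/(2*(2-α)) with hℓ_def
    set u : ℝ := (2*t)^2/(2*(2-α)) + (2*t)^3 * Real.exp (2*t) / 6 with hu_def
    have hl : ℓ = 25/128 * m := by
      rw [hℓ_def, ht_def, hm_def]
      field_simp
      ring
    have hta : t * (y/4) = 5/32 * m := by
      rw [ht_def, hm_def]; ring
    have hc : t * (y/4) ≤ ℓ := by rw [hl, hta]; nlinarith
    have key := pz μ X₁ t (y/4) ℓ u (hXint t) (hXint (2*t))
      (by rw [hmgf t]; exact Real.exp_le_exp.2 (Jlb_pos hα1 hα2 ht0))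
      (by rw [hmgf (2*t)]
          exact Real.exp_le_exp.2 (Jub_pos hα1 hα2 (by linarith)))
      hc
      {ω | y/4 ≤ X₁ ω} (measurableSet_le measurable_const hXmeas)
      (by intro ω hω
          simp only [Set.mem_setOf_eq, not_le] at hω
          exact mul_le_mul_of_nonneg_left hω.le ht0)
    -- numeric part
    have harg : t * (y/4) - ℓ ≤ -(5/32) := by
      rw [hl, hta]; nlinarith
    have hw : (1:ℝ)/10 ≤ 1 - Real.exp (t*(y/4) - ℓ) := by
      have h1 : Real.exp (t*(y/4) - ℓ) ≤ Real.exp (-(5/32)) := Real.exp_le_exp.2 harg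
      have h2 := S5 (show (0:ℝ) ≤ 5/32 by norm_num)
      norm_num at h2 ⊢
      linarith
    have ht3 : t^3 ≤ 125/2048 * m := by
      have e : t^3 = 125/512 * (((2-α)*y) * ((2-α)) * m) := by
        rw [ht_def, hm_def]; ring
      have b1 : ((2-α)*y) * (2-α) ≤ 1/4 := by nlinarith
      have b2 : ((2-α)*y) * (2-α) * m ≤ (1/4) * m := by
        apply mul_le_mul_of_nonneg_right b1 hm0
      rw [e]; linarith
    have hexp2t : Real.exp (2*t) ≤ 7/2 := by
      refine le_trans (Real.exp_le_exp.2 ?_) exp54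
      rw [ht_def]; linarith
    have hF3 : -m ≤ 2*ℓ - u := by
      have ht30 : 0 ≤ t^3 := by positivity
      have hcube : t^3 * Real.exp (2*t) ≤ (125/2048 * m) * (7/2) := by
        have he0 : 0 < Real.exp (2*t) := Real.exp_pos _
        nlinarith
      have hu2 : u = 25/32 * m + (4/3) * (t^3 * Real.exp (2*t)) := by
        rw [hu_def, ht_def, hm_def]
        field_simp
        ring
      rw [hu2, hl]
      nlinarith
    calc (1/100) * Real.exp (-(2-α) * y^2)
        = (1/100) * Real.exp (-m) := by rw [hm_def]; ring_nf
      _ ≤ (1 - Real.exp (t*(y/4) - ℓ))^2 * Real.exp (2*ℓ - u) := by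
          have he1 : Real.exp (-m) ≤ Real.exp (2*ℓ - u) := Real.exp_le_exp.2 hF3
          have he0 : 0 < Real.exp (-m) := Real.exp_pos _
          have hw2 : (1/100:ℝ) ≤ (1 - Real.exp (t*(y/4) - ℓ))^2 := by nlinarith
          exact mul_le_mul hw2 he1 he0.le (le_trans (by norm_num) hw2)
      _ ≤ (μ {ω | y/4 ≤ X₁ ω}).toReal := key
  · -- Part 2: left tail
    intro y hy
    obtain ⟨hy1, hy2⟩ := hy
    have hy0 : 0 < y := lt_of_lt_of_le (by positivity) hy1
    have h2y : 2 ≤ y * Real.sqrt (2-α) := (div_le_iff₀ hs).mp hy1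
    set m : ℝ := (2-α) * y^2 with hm_def
    have hm : 4 ≤ m := by nlinarith
    have hm0 : (0:ℝ) ≤ m := by linarith
    have hby : (2-α) * y ≤ 2 := by
      have h := (le_div_iff₀ hβ0).mp hy2
      linarith
    have hby0 : 0 ≤ (2-α) * y := by positivity
    set t : ℝ := -(((2-α)*y)/2) with ht_def
    have ht0 : t ≤ 0 := by rw [ht_def]; linarith
    have htm1 : -1 ≤ t := by rw [ht_def]; linarith
    have hexpt : (4:ℝ)/11 ≤ Real.exp t :=
      le_trans expneg1 (Real.exp_le_exp.2 htm1)
    set ℓ : ℝ := t^2/(2*(2-α)) * Real.exp t with hℓ_def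
    set u : ℝ := (2*t)^2/(2*(2-α)) with hu_def
    have hl : ℓ = (m/8) * Real.exp t := by
      rw [hℓ_def, ht_def, hm_def]
      field_simp
      ring
    have hu2 : u = m/2 := by
      rw [hu_def, ht_def, hm_def]
      field_simp
    have hta : t * (-(y/24)) = 1/48 * m := by
      rw [ht_def, hm_def]; ring
    have hc : t * (-(y/24)) ≤ ℓ := by
      rw [hl, hta]; nlinarith
    have key := pz μ X₁ t (-(y/24)) ℓ u (hXint t) (hXint (2*t))
      (by rw [hmgf t]; exact Real.exp_le_exp.2 (Jlb_neg hα1 hα2 ht0))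
      (by rw [hmgf (2*t)]
          exact Real.exp_le_exp.2 (Jub_neg hα1 hα2 (by linarith)))
      hc
      {ω | X₁ ω ≤ -(y/24)} (measurableSet_le hXmeas measurable_const)
      (by intro ω hω
          simp only [Set.mem_setOf_eq, not_le] at hω
          exact mul_le_mul_of_nonpos_left hω.le ht0)
    have harg : t * (-(y/24)) - ℓ ≤ -(13/132) := by
      rw [hl, hta]
      nlinarith
    have hw : (1547:ℝ)/17424 ≤ 1 - Real.exp (t * (-(y/24)) - ℓ) := by
      have h1 : Real.exp (t * (-(y/24)) - ℓ) ≤ Real.exp (-(13/132)) := Real.exp_le_exp.2 harg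
      have h2 := S5 (show (0:ℝ) ≤ 13/132 by norm_num)
      norm_num at h2
      linarith
    have hF3 : 13/22 * m + -m ≤ 2*ℓ - u := by
      rw [hl, hu2]
      nlinarith
    have hstep : (37:ℝ)/11 * Real.exp (-m) ≤ Real.exp (2*ℓ - u) := by
      have h1 : Real.exp (13/22 * m + -m) ≤ Real.exp (2*ℓ - u) := Real.exp_le_exp.2 hF3
      rw [Real.exp_add] at h1
      have h2 : (37:ℝ)/11 ≤ Real.exp (13/22 * m) := by
        have := Real.add_one_le_exp (13/22 * m)
        linarith
      have he0 : 0 < Real.exp (-m) := Real.exp_pos _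
      nlinarith
    calc (1/100) * Real.exp (-(2-α) * y^2)
        = (1/100) * Real.exp (-m) := by rw [hm_def]; ring_nf
      _ ≤ (1 - Real.exp (t * (-(y/24)) - ℓ))^2 * Real.exp (2*ℓ - u) := by
          have he0 : 0 < Real.exp (-m) := Real.exp_pos _
          have hw2 : (1547/17424:ℝ)^2 ≤ (1 - Real.exp (t * (-(y/24)) - ℓ))^2 := by nlinarith
          calc (1/100) * Real.exp (-m) ≤ (1547/17424:ℝ)^2 * (37/11 * Real.exp (-m)) := by
                nlinarith
            _ ≤ (1 - Real.exp (t * (-(y/24)) - ℓ))^2 * Real.exp (2*ℓ - u) := by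
                apply mul_le_mul hw2 hstep (by positivity) (by positivity)
      _ ≤ (μ {ω | X₁ ω ≤ -(y/24)}).toReal := key
end

section
/- For every α ∈ (1,2) and every t ∈ ℝ one has t²/(2−α) ≤ 2 ∫₀¹ (cosh(tx) − 1) x^{−α−1} dx ≤ t²/(2−α) + (1/24) t⁴ (14/15 + (1/15) cosh(t)). Equivalently, a real random variable X̃₁ with moment generating function E[exp(t X̃₁)] = exp( 2∫₀¹ (cosh(tx) − 1) x^{−α−1} dx ) satisfies exp(t²/(2−α)) ≤ E[exp(t X̃₁)] ≤ exp( (1/24) t⁴ (14/15 + (1/15) cosh(t)) ) · exp(t²/(2−α)). -/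
open MeasureTheory ProbabilityTheory Finset

lemma exp_tail (y : ℝ) (k : ℕ) :
    ∑' n : ℕ, y ^ (n + k) / (Nat.factorial (n + k) : ℝ) = Real.exp y - ∑ i ∈ range k, y ^ i / (Nat.factorial i : ℝ) := by
  have hs := Real.summable_pow_div_factorial y
  have h := Summable.sum_add_tsum_nat_add' ((summable_nat_add_iff k).2 hs)
  have hexp : ∑' n : ℕ, y ^ n / (Nat.factorial n : ℝ) = Real.exp y := by
    rw [Real.exp_eq_exp_ℝ, NormedSpace.exp_eq_tsum_div]
  linarith [h, hexp]

lemma sq_le_sinh_sq (x : ℝ) : x ^ 2 ≤ Real.sinh x ^ 2 := by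
  have key : ∀ z : ℝ, 0 ≤ z → z ^ 2 ≤ Real.sinh z ^ 2 := by
    intro z hz
    rcases eq_or_lt_of_le hz with h | h
    · simp [← h]
    · have := (Real.self_lt_sinh_iff.mpr h).le
      exact pow_le_pow_left₀ hz this 2
  rcases le_or_gt 0 x with h | h
  · exact key x h
  · have := key (-x) (by linarith)
    simpa [Real.sinh_neg] using this

lemma cosh_lower (y : ℝ) : 1 + y ^ 2 / 2 ≤ Real.cosh y := by
  have h1 : Real.cosh y = 1 + 2 * Real.sinh (y / 2) ^ 2 := by
    have := Real.cosh_two_mul (y / 2)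
    have h2 := Real.cosh_sq' (y / 2)
    rw [show 2 * (y / 2) = y by ring] at this
    rw [this, h2]; ring
  have := sq_le_sinh_sq (y / 2)
  rw [h1]; nlinarith

lemma cosh_upper (y : ℝ) :
    Real.cosh y - 1 - y ^ 2 / 2 - y ^ 4 / 24 ≤ y ^ 4 * (Real.cosh y - 1) / 360 := by
  have hsA : ∀ z : ℝ, Summable (fun n : ℕ => z ^ (n + 6) / (Nat.factorial (n + 6) : ℝ)) :=
    fun z => (summable_nat_add_iff (f := fun n : ℕ => z ^ n / (Nat.factorial n : ℝ)) 6).mpr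
      (Real.summable_pow_div_factorial z)
  have hsB : ∀ z : ℝ, Summable (fun n : ℕ => z ^ (n + 2) / (Nat.factorial (n + 2) : ℝ)) :=
    fun z => (summable_nat_add_iff (f := fun n : ℕ => z ^ n / (Nat.factorial n : ℝ)) 2).mpr
      (Real.summable_pow_div_factorial z)
  have hA : Summable (fun n : ℕ => y ^ (n + 6) / (Nat.factorial (n + 6) : ℝ) + (-y) ^ (n + 6) / (Nat.factorial (n + 6) : ℝ)) :=
    (hsA y).add (hsA (-y))
  have hB : Summable (fun n : ℕ =>
      y ^ 4 / 360 * (y ^ (n + 2) / (Nat.factorial (n + 2) : ℝ) + (-y) ^ (n + 2) / (Nat.factorial (n + 2) : ℝ))) :=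
    (((hsB y).add (hsB (-y))).mul_left _)
  have hterm : ∀ n : ℕ,
      y ^ (n + 6) / (Nat.factorial (n + 6) : ℝ) + (-y) ^ (n + 6) / (Nat.factorial (n + 6) : ℝ)
        ≤ y ^ 4 / 360 * (y ^ (n + 2) / (Nat.factorial (n + 2) : ℝ) + (-y) ^ (n + 2) / (Nat.factorial (n + 2) : ℝ)) := by
    intro n
    have hpow : y ^ (n + 6) + (-y) ^ (n + 6) = y ^ 4 * (y ^ (n + 2) + (-y) ^ (n + 2)) := by
      have : (-y) ^ (n + 6) = (-y) ^ (n + 2) * (-y) ^ 4 := by rw [← pow_add]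
      rw [this, show y ^ (n + 6) = y ^ (n + 2) * y ^ 4 by rw [← pow_add]]
      ring
    have hs_nonneg : 0 ≤ y ^ (n + 2) + (-y) ^ (n + 2) := by
      rcases Nat.even_or_odd (n + 2) with he | ho
      · rw [he.neg_pow]
        have := he.pow_nonneg y
        linarith
      · rw [ho.neg_pow]; linarith
    have hfact : (360 : ℝ) * (Nat.factorial (n + 2) : ℝ) ≤ (Nat.factorial (n + 6) : ℝ) := by
      have : 360 * Nat.factorial (n + 2) ≤ Nat.factorial (n + 6) := by
        have h1 : Nat.factorial (n + 6) = (n + 6) * ((n + 5) * ((n + 4) * ((n + 3) * Nat.factorial (n + 2)))) := by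
          simp [Nat.factorial_succ]
        rw [h1]
        have : 360 ≤ (n + 6) * ((n + 5) * ((n + 4) * (n + 3))) := by
          calc (360:ℕ) = 6 * (5 * (4 * 3)) := by norm_num
            _ ≤ (n + 6) * ((n + 5) * ((n + 4) * (n + 3))) := by gcongr <;> omega
        calc 360 * Nat.factorial (n + 2) ≤ ((n + 6) * ((n + 5) * ((n + 4) * (n + 3)))) * Nat.factorial (n + 2) :=
              Nat.mul_le_mul_right _ this
          _ = (n + 6) * ((n + 5) * ((n + 4) * ((n + 3) * Nat.factorial (n + 2)))) := by ring
      exact_mod_cast this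
    have h2 : (y ^ (n + 6) + (-y) ^ (n + 6)) / (Nat.factorial (n + 6) : ℝ)
        ≤ (y ^ 4 * (y ^ (n + 2) + (-y) ^ (n + 2))) / (360 * (Nat.factorial (n + 2) : ℝ)) := by
      rw [hpow]
      apply div_le_div_of_nonneg_left _ _ hfact
      · positivity
      · positivity
    calc y ^ (n + 6) / (Nat.factorial (n + 6) : ℝ) + (-y) ^ (n + 6) / (Nat.factorial (n + 6) : ℝ)
        = (y ^ (n + 6) + (-y) ^ (n + 6)) / (Nat.factorial (n + 6) : ℝ) := by ring
      _ ≤ (y ^ 4 * (y ^ (n + 2) + (-y) ^ (n + 2))) / (360 * (Nat.factorial (n + 2) : ℝ)) := h2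
      _ = y ^ 4 / 360 * (y ^ (n + 2) / (Nat.factorial (n + 2) : ℝ) + (-y) ^ (n + 2) / (Nat.factorial (n + 2) : ℝ)) := by ring
  have hineq := Summable.tsum_le_tsum hterm hA hB
  have hAsum : ∑' n : ℕ, (y ^ (n + 6) / (Nat.factorial (n + 6) : ℝ) + (-y) ^ (n + 6) / (Nat.factorial (n + 6) : ℝ))
      = 2 * Real.cosh y - 2 - y ^ 2 - y ^ 4 / 12 := by
    rw [Summable.tsum_add (hsA y) (hsA (-y)), exp_tail y 6, exp_tail (-y) 6, Real.cosh_eq]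
    simp [Finset.sum_range_succ, Nat.factorial]
    ring
  have hBsum : ∑' n : ℕ, (y ^ 4 / 360 * (y ^ (n + 2) / (Nat.factorial (n + 2) : ℝ) + (-y) ^ (n + 2) / (Nat.factorial (n + 2) : ℝ)))
      = y ^ 4 / 360 * (2 * Real.cosh y - 2) := by
    rw [tsum_mul_left, Summable.tsum_add (hsB y) (hsB (-y)), exp_tail y 2, exp_tail (-y) 2, Real.cosh_eq]
    congr 1
    simp [Finset.sum_range_succ, Nat.factorial]
    ring
  rw [hAsum, hBsum] at hineq
  linarith

lemma rpow_integrableOn (p : ℝ) (hp : -1 < p) :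
    IntegrableOn (fun x : ℝ => x ^ p) (Set.Ioo (0:ℝ) 1) := by
  have h := intervalIntegral.intervalIntegrable_rpow' (a := 0) (b := 1) hp
  rw [intervalIntegrable_iff_integrableOn_Ioo_of_le zero_le_one] at h
  exact h

lemma rpow_integral_Ioo (p : ℝ) (hp : -1 < p) :
    ∫ x in Set.Ioo (0:ℝ) 1, x ^ p = 1 / (p + 1) := by
  rw [← integral_Ioc_eq_integral_Ioo, ← intervalIntegral.integral_of_le zero_le_one,
    integral_rpow (Or.inl hp)]
  rw [Real.one_rpow, Real.zero_rpow (by linarith)]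
  ring

lemma integral_bounds_small_jumps (α : ℝ) (hα : α ∈ Set.Ioo (1:ℝ) 2) (t : ℝ) :
    t^2/(2-α) ≤ 2 * ∫ x in Set.Ioo (0:ℝ) 1, (Real.cosh (t*x) - 1) * x ^ (-α-1)
      ∧ 2 * ∫ x in Set.Ioo (0:ℝ) 1, (Real.cosh (t*x) - 1) * x ^ (-α-1)
          ≤ t^2/(2-α) + (1/24) * t^4 * (14/15 + (1/15) * Real.cosh t) := by
  obtain ⟨hα1, hα2⟩ := hα
  set C : ℝ := 14/15 + (1/15) * Real.cosh t with hCdef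
  have hC1 : 1 ≤ C := by have := Real.one_le_cosh t; rw [hCdef]; linarith
  have hC0 : 0 ≤ C := by linarith
  set f : ℝ → ℝ := fun x => (Real.cosh (t*x) - 1) * x ^ (-α-1) with hfdef
  have hp1 : (-1:ℝ) < 1 - α := by linarith
  have hp3 : (-1:ℝ) < 3 - α := by linarith
  -- pointwise bounds
  have hbounds : ∀ x ∈ Set.Ioo (0:ℝ) 1,
      (t^2/2) * x ^ (1-α) ≤ f x ∧
      f x ≤ (t^2/2) * x ^ (1-α) + (C * t^4/24) * x ^ (3-α) := by
    rintro x ⟨hx0, hx1⟩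
    have hxr : 0 ≤ x ^ (-α-1) := Real.rpow_nonneg hx0.le _
    have e1 : x ^ (1-α) = x ^ 2 * x ^ (-α-1) := by
      rw [← Real.rpow_natCast x 2, ← Real.rpow_add hx0]
      congr 1
      push_cast; ring
    have e3 : x ^ (3-α) = x ^ 4 * x ^ (-α-1) := by
      rw [← Real.rpow_natCast x 4, ← Real.rpow_add hx0]
      congr 1
      push_cast; ring
    have hcl := cosh_lower (t * x)
    have hcu := cosh_upper (t * x)
    have hmono : Real.cosh (t * x) ≤ Real.cosh t := by
      apply Real.cosh_le_cosh.mpr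
      rw [abs_mul]
      calc |t| * |x| ≤ |t| * 1 := by
            apply mul_le_mul_of_nonneg_left _ (abs_nonneg t)
            rw [abs_of_nonneg hx0.le]; exact hx1.le
        _ = |t| := mul_one _
    constructor
    · rw [hfdef, e1]
      have : (t^2/2) * (x ^ 2 * x ^ (-α-1)) = ((t*x)^2/2) * x ^ (-α-1) := by ring
      rw [this]
      apply mul_le_mul_of_nonneg_right _ hxr
      linarith
    · rw [hfdef, e1, e3]
      have key : Real.cosh (t*x) - 1 ≤ (t*x)^2/2 + (C/24) * (t*x)^4 := by
        have h4 : (0:ℝ) ≤ (t*x)^4 := by positivity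
        have hc1 : 0 ≤ Real.cosh (t*x) - 1 := by linarith [Real.one_le_cosh (t*x)]
        have : (t*x)^4 * (Real.cosh (t*x) - 1) / 360 ≤ (t*x)^4 * (Real.cosh t - 1) / 360 := by
          apply div_le_div_of_nonneg_right _ (by norm_num)
          · exact mul_le_mul_of_nonneg_left (by linarith) h4
        have hCc : C/24 = 1/24 + (Real.cosh t - 1)/360 := by rw [hCdef]; ring
        nlinarith [hcu]
      have hx24 : (t*x)^4 = t^4 * x^4 := by ring
      calc (Real.cosh (t*x) - 1) * x ^ (-α-1)
          ≤ ((t*x)^2/2 + (C/24) * (t*x)^4) * x ^ (-α-1) :=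
            mul_le_mul_of_nonneg_right key hxr
        _ = t^2/2 * (x ^ 2 * x ^ (-α-1)) + C * t^4/24 * (x ^ 4 * x ^ (-α-1)) := by ring
  -- integrability
  have hJ1 := rpow_integrableOn _ hp1
  have hJ3 := rpow_integrableOn _ hp3
  have hg_int : IntegrableOn
      (fun x : ℝ => (t^2/2) * x ^ (1-α) + (C * t^4/24) * x ^ (3-α)) (Set.Ioo (0:ℝ) 1) :=
    (hJ1.const_mul _).add (hJ3.const_mul _)
  have hlow_int : IntegrableOn (fun x : ℝ => (t^2/2) * x ^ (1-α)) (Set.Ioo (0:ℝ) 1) :=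
    hJ1.const_mul _
  have hf_meas : AEStronglyMeasurable f (volume.restrict (Set.Ioo (0:ℝ) 1)) := by
    apply Measurable.aestronglyMeasurable
    fun_prop
  have hf_nonneg : ∀ x ∈ Set.Ioo (0:ℝ) 1, 0 ≤ f x := by
    rintro x ⟨hx0, _⟩
    exact mul_nonneg (by linarith [Real.one_le_cosh (t*x)]) (Real.rpow_nonneg hx0.le _)
  have hf_int : IntegrableOn f (Set.Ioo (0:ℝ) 1) := by
    apply Integrable.mono' hg_int hf_meas
    filter_upwards [ae_restrict_mem measurableSet_Ioo] with x hx
    rw [Real.norm_eq_abs, abs_of_nonneg (hf_nonneg x hx)]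
    exact (hbounds x hx).2
  -- integral values
  have hv1 : ∫ x in Set.Ioo (0:ℝ) 1, (t^2/2) * x ^ (1-α) = (t^2/2) * (1/(2-α)) := by
    rw [integral_const_mul, rpow_integral_Ioo _ hp1, show (1:ℝ)-α+1 = 2-α by ring]
  have hv3 : ∫ x in Set.Ioo (0:ℝ) 1,
      ((t^2/2) * x ^ (1-α) + (C * t^4/24) * x ^ (3-α))
      = (t^2/2) * (1/(2-α)) + (C * t^4/24) * (1/(4-α)) := by
    rw [integral_add (hJ1.const_mul _) (hJ3.const_mul _), integral_const_mul, integral_const_mul,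
      rpow_integral_Ioo _ hp1, rpow_integral_Ioo _ hp3, show (1:ℝ)-α+1 = 2-α by ring,
      show (3:ℝ)-α+1 = 4-α by ring]
  have hlow : (t^2/2) * (1/(2-α)) ≤ ∫ x in Set.Ioo (0:ℝ) 1, f x := by
    rw [← hv1]
    exact setIntegral_mono_on hlow_int hf_int measurableSet_Ioo (fun x hx => (hbounds x hx).1)
  have hup : ∫ x in Set.Ioo (0:ℝ) 1, f x
      ≤ (t^2/2) * (1/(2-α)) + (C * t^4/24) * (1/(4-α)) := by
    rw [← hv3]
    exact setIntegral_mono_on hf_int hg_int measurableSet_Ioo (fun x hx => (hbounds x hx).2)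
  have h2α : (0:ℝ) < 2 - α := by linarith
  have h4α : (2:ℝ) ≤ 4 - α := by linarith
  have hval2 : 2 * ((t^2/2) * (1/(2-α))) = t^2/(2-α) := by
    field_simp
  constructor
  · rw [← hval2]; linarith
  · have hfrac : 1/(4-α) ≤ 1/2 := by
      apply one_div_le_one_div_of_le (by norm_num) h4α
    have hCt : 0 ≤ C * t^4 := by positivity
    have : 2 * ((C * t^4/24) * (1/(4-α))) ≤ (1/24) * t^4 * C := by
      calc 2 * ((C * t^4/24) * (1/(4-α))) ≤ 2 * ((C * t^4/24) * (1/2)) := by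
            apply mul_le_mul_of_nonneg_left _ (by norm_num)
            exact mul_le_mul_of_nonneg_left hfrac (by positivity)
        _ = (1/24) * t^4 * C * (1/2) * 2 := by ring
        _ = (1/24) * t^4 * C := by ring
    linarith


/-- Fix `α ∈ (1,2)`. For every `t ∈ ℝ`,
`t²/(2-α) ≤ 2∫₀¹ (cosh(tx) - 1) x^{-α-1} dx ≤ t²/(2-α) + (1/24)t⁴(14/15 + (1/15)cosh t)`.
Equivalently, a random variable `X̃₁` with moment generating function
`E[exp(t X̃₁)] = exp(2∫₀¹ (cosh(tx) - 1) x^{-α-1} dx)` satisfies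
`exp(t²/(2-α)) ≤ E[exp(t X̃₁)] ≤ exp((1/24)t⁴(14/15 + (1/15)cosh t)) · exp(t²/(2-α))`. -/
theorem mgf_bounds_small_jumps_symmetric
    {Ω : Type*} [MeasurableSpace Ω] (μ : Measure Ω) [IsProbabilityMeasure μ]
    (α : ℝ) (hα : α ∈ Set.Ioo (1:ℝ) 2)
    (X : Ω → ℝ) (hXmeas : Measurable X)
    (hXint : ∀ t : ℝ, Integrable (fun ω => Real.exp (t * X ω)) μ)
    (hmgf : ∀ t : ℝ, ∫ ω, Real.exp (t * X ω) ∂μ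
      = Real.exp (2 * ∫ x in Set.Ioo (0:ℝ) 1, (Real.cosh (t*x) - 1) * x ^ (-α-1))) :
    ∀ t : ℝ,
      (t^2/(2-α) ≤ 2 * ∫ x in Set.Ioo (0:ℝ) 1, (Real.cosh (t*x) - 1) * x ^ (-α-1)
        ∧ 2 * ∫ x in Set.Ioo (0:ℝ) 1, (Real.cosh (t*x) - 1) * x ^ (-α-1)
            ≤ t^2/(2-α) + (1/24) * t^4 * (14/15 + (1/15) * Real.cosh t))
      ∧ (Real.exp (t^2/(2-α)) ≤ ∫ ω, Real.exp (t * X ω) ∂μ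
        ∧ ∫ ω, Real.exp (t * X ω) ∂μ
            ≤ Real.exp ((1/24) * t^4 * (14/15 + (1/15) * Real.cosh t))
              * Real.exp (t^2/(2-α))) := by
  intro t
  obtain ⟨h1, h2⟩ := integral_bounds_small_jumps α hα t
  refine ⟨⟨h1, h2⟩, ?_, ?_⟩
  · rw [hmgf t]
    exact Real.exp_le_exp.mpr h1
  · rw [hmgf t, ← Real.exp_add]
    exact Real.exp_le_exp.mpr (by linarith)
end

section
/- For every y with 0 ≤ y ≤ 2/(2−α) one has P( X̃₁ ≥ y ) ≤ e^{2/45} exp(−(1/4)(2−α) y²), and for every y ∈ [2/√(2−α), 2/(2−α)] one has P( X̃₁ ≥ (√2/4) y ) ≥ (1/3) exp(−(2−α) y²). -/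
open MeasureTheory ProbabilityTheory

namespace GTSJhelper

open Real Set

/-- Monotonicity from a global derivative that is nonnegative on `[0,∞)`. -/
lemma mono_aux {f f' : ℝ → ℝ} (hd : ∀ x, HasDerivAt f (f' x) x)
    (h0 : ∀ x, 0 ≤ x → 0 ≤ f' x) : MonotoneOn f (Set.Ici 0) := by
  apply monotoneOn_of_deriv_nonneg (convex_Ici 0)
    (fun x _ => (hd x).continuousAt.continuousWithinAt)
    (fun x _ => (hd x).differentiableAt.differentiableWithinAt)
  intro x hx
  rw [interior_Ici] at hx
  rw [(hd x).deriv]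
  exact h0 x (le_of_lt hx)

lemma k3_nonneg : ∀ u : ℝ, 0 ≤ u → 0 ≤ u * Real.cosh u - Real.sinh u := by
  intro u hu
  have h := mono_aux (f := fun u => u * Real.cosh u - Real.sinh u)
      (f' := fun u => u * Real.sinh u)
      (fun x => by
        have := ((hasDerivAt_id x).mul (Real.hasDerivAt_cosh x)).sub (Real.hasDerivAt_sinh x)
        exact this.congr_deriv (by simp only [id]; ring))
      (fun x hx => mul_nonneg hx (Real.sinh_nonneg_iff.mpr hx))
  have := h (Set.self_mem_Ici) (Set.mem_Ici.mpr hu) hu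
  simpa using this

lemma k2_nonneg : ∀ u : ℝ, 0 ≤ u → 0 ≤ u * Real.sinh u + 2 - 2 * Real.cosh u := by
  intro u hu
  have h := mono_aux (f := fun u => u * Real.sinh u + 2 - 2 * Real.cosh u)
      (f' := fun u => u * Real.cosh u - Real.sinh u)
      (fun x => by
        have := (((hasDerivAt_id x).mul (Real.hasDerivAt_sinh x)).add_const 2).sub
          ((Real.hasDerivAt_cosh x).const_mul 2)
        exact this.congr_deriv (by simp only [id]; ring))
      k3_nonneg
  have := h (Set.self_mem_Ici) (Set.mem_Ici.mpr hu) hu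
  simpa using this

lemma k1_nonneg : ∀ u : ℝ, 0 ≤ u → 0 ≤ u * Real.cosh u + 2 * u - 3 * Real.sinh u := by
  intro u hu
  have h := mono_aux (f := fun u => u * Real.cosh u + 2 * u - 3 * Real.sinh u)
      (f' := fun u => u * Real.sinh u + 2 - 2 * Real.cosh u)
      (fun x => by
        have := (((hasDerivAt_id x).mul (Real.hasDerivAt_cosh x)).add
          ((hasDerivAt_id x).const_mul 2)).sub ((Real.hasDerivAt_sinh x).const_mul 3)
        exact this.congr_deriv (by simp only [id]; ring))
      k2_nonneg
  have := h (Set.self_mem_Ici) (Set.mem_Ici.mpr hu) hu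
  simpa using this

lemma k0_nonneg : ∀ u : ℝ, 0 ≤ u → 0 ≤ u * Real.sinh u + u ^ 2 + 4 - 4 * Real.cosh u := by
  intro u hu
  have h := mono_aux (f := fun u => u * Real.sinh u + u ^ 2 + 4 - 4 * Real.cosh u)
      (f' := fun u => u * Real.cosh u + 2 * u - 3 * Real.sinh u)
      (fun x => by
        have := ((((hasDerivAt_id x).mul (Real.hasDerivAt_sinh x)).add
          (hasDerivAt_pow 2 x)).add_const 4).sub ((Real.hasDerivAt_cosh x).const_mul 4)
        exact this.congr_deriv (by simp only [id]; norm_num; ring))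
      k1_nonneg
  have := h (Set.self_mem_Ici) (Set.mem_Ici.mpr hu) hu
  simpa using this

lemma coshfun_hasDeriv (x : ℝ) :
    HasDerivAt (fun u : ℝ => Real.cosh u - 1 - u ^ 2 / 2) (Real.sinh x - x) x := by
  have := ((Real.hasDerivAt_cosh x).sub_const 1).sub ((hasDerivAt_pow 2 x).div_const 2)
  exact this.congr_deriv (by norm_num)

lemma coshfun_mono : MonotoneOn (fun u : ℝ => Real.cosh u - 1 - u ^ 2 / 2) (Set.Ici 0) := by
  apply mono_aux (f' := fun u => Real.sinh u - u) coshfun_hasDeriv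
  intro x hx
  have := Real.self_le_sinh_iff.mpr hx
  linarith

/-- Quadratic lower bound for `cosh`. -/
lemma cosh_quad_lower (u : ℝ) (hu : 0 ≤ u) : 0 ≤ Real.cosh u - 1 - u ^ 2 / 2 := by
  have := coshfun_mono (Set.self_mem_Ici) (Set.mem_Ici.mpr hu) hu
  simpa using this

lemma cosh_diff (a b : ℝ) (ha : 0 ≤ a) (hab : a ≤ b) :
    (b ^ 2 - a ^ 2) / 2 ≤ Real.cosh b - Real.cosh a := by
  have := coshfun_mono (Set.mem_Ici.mpr ha) (Set.mem_Ici.mpr (ha.trans hab)) hab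
  simp only at this
  linarith

/-- The quartic comparison: `(cosh u - 1 - u²/2)/u⁴` is monotone. -/
lemma quart (u v : ℝ) (hu : 0 ≤ u) (huv : u ≤ v) :
    v ^ 4 * (Real.cosh u - 1 - u ^ 2 / 2) ≤ u ^ 4 * (Real.cosh v - 1 - v ^ 2 / 2) := by
  rcases eq_or_lt_of_le hu with h | h
  · rw [← h]
    simp [Real.cosh_zero]
  have hv : 0 < v := lt_of_lt_of_le h huv
  have hmono : MonotoneOn (fun w : ℝ => (Real.cosh w - 1 - w ^ 2 / 2) / w ^ 4) (Set.Ioi 0) := by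
    have hder : ∀ x : ℝ, 0 < x → HasDerivAt (fun w : ℝ => (Real.cosh w - 1 - w ^ 2 / 2) / w ^ 4)
        (((Real.sinh x - x) * x ^ 4 - (Real.cosh x - 1 - x ^ 2 / 2) * (4 * x ^ 3)) / (x ^ 4) ^ 2)
        x := by
      intro x hx
      have h2 : HasDerivAt (fun w : ℝ => w ^ 4) (4 * x ^ 3) x := by
        have := hasDerivAt_pow 4 x
        exact this.congr_deriv (by norm_num)
      exact (coshfun_hasDeriv x).div h2 (pow_ne_zero 4 (ne_of_gt hx))
    apply monotoneOn_of_deriv_nonneg (convex_Ioi 0)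
      (fun x hx => (hder x (Set.mem_Ioi.mp hx)).continuousAt.continuousWithinAt)
      (by
        intro x hx
        rw [interior_Ioi] at hx
        exact (hder x (Set.mem_Ioi.mp hx)).differentiableAt.differentiableWithinAt)
    intro x hx
    rw [interior_Ioi] at hx
    have hxpos : 0 < x := Set.mem_Ioi.mp hx
    rw [(hder x hxpos).deriv]
    apply div_nonneg _ (sq_nonneg _)
    have hk := k0_nonneg x hxpos.le
    have hx3 : (0:ℝ) ≤ x ^ 3 := pow_nonneg hxpos.le 3
    nlinarith [mul_nonneg hx3 hk]
  have h2 := hmono (Set.mem_Ioi.mpr h) (Set.mem_Ioi.mpr hv) huv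
  simp only at h2
  rw [div_le_div_iff₀ (by positivity) (by positivity)] at h2
  nlinarith [h2]

noncomputable def J (α s : ℝ) : ℝ :=
  ∫ x in Set.Ioo (0:ℝ) 1, (Real.cosh (s * x) - 1) * x ^ (-α - 1)

section Jlemmas

variable {α : ℝ} (hα : α ∈ Set.Ioo (1:ℝ) 2)

lemma integrable_rpow_aux (r : ℝ) (hr : -1 < r) :
    IntegrableOn (fun x : ℝ => x ^ r) (Set.Ioo (0:ℝ) 1) := by
  have h := intervalIntegral.intervalIntegrable_rpow' (a := 0) (b := 1) hr
  rwa [intervalIntegrable_iff_integrableOn_Ioo_of_le (by norm_num : (0:ℝ) ≤ 1)] at h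

lemma integral_rpow_Ioo (r : ℝ) (hr : -1 < r) :
    ∫ x in Set.Ioo (0:ℝ) 1, x ^ r = 1 / (r + 1) := by
  have h := _root_.integral_rpow (a := 0) (b := 1) (Or.inl hr)
  have h2 := intervalIntegral.integral_of_le (μ := volume) (f := fun x : ℝ => x ^ r)
    (by norm_num : (0:ℝ) ≤ 1)
  rw [h2, MeasureTheory.integral_Ioc_eq_integral_Ioo] at h
  rw [h, Real.one_rpow, Real.zero_rpow (by linarith : r + 1 ≠ 0)]
  ring

include hα

lemma rpow_split2 {x : ℝ} (hx : 0 < x) : x ^ (1 - α) = x ^ 2 * x ^ (-α - 1) := by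
  rw [← Real.rpow_natCast x 2, ← Real.rpow_add hx]
  congr 1
  push_cast
  ring

lemma rpow_split4 {x : ℝ} (hx : 0 < x) : x ^ (3 - α) = x ^ 4 * x ^ (-α - 1) := by
  rw [← Real.rpow_natCast x 4, ← Real.rpow_add hx]
  congr 1
  push_cast
  ring

lemma integrand_upper {s v : ℝ} (hs : 0 ≤ s) (hsv : s ≤ v) {x : ℝ} (hx : x ∈ Set.Ioo (0:ℝ) 1) :
    (Real.cosh (s * x) - 1) * x ^ (-α - 1)
      ≤ s ^ 2 / 2 * x ^ (1 - α) + (Real.cosh v - 1 - v ^ 2 / 2) * x ^ (3 - α) := by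
  obtain ⟨hx0, hx1⟩ := hx
  have hv : 0 ≤ v := hs.trans hsv
  have hsx : 0 ≤ s * x := mul_nonneg hs hx0.le
  have hsxv : s * x ≤ v := le_trans (by nlinarith : s * x ≤ s) hsv
  have hCv := cosh_quad_lower v hv
  have hq := quart (s * x) v hsx hsxv
  have hA := cosh_quad_lower (s * x) hsx
  -- key : cosh (s*x) - 1 ≤ (s*x)^2/2 + x^4 * (cosh v - 1 - v^2/2)
  have key : Real.cosh (s * x) - 1 ≤ (s * x) ^ 2 / 2 + x ^ 4 * (Real.cosh v - 1 - v ^ 2 / 2) := by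
    rcases eq_or_lt_of_le hv with hv0 | hv0
    · have hs0 : s = 0 := le_antisymm (hsv.trans hv0.symm.le) hs
      have hx4 : (0:ℝ) ≤ x ^ 4 := pow_nonneg hx0.le 4
      simp only [hs0, zero_mul, Real.cosh_zero]
      nlinarith [mul_nonneg hx4 hCv]
    · have hpow : (s * x) ^ 4 ≤ v ^ 4 * x ^ 4 := by
        have : (s * x) ^ 4 ≤ (v * x) ^ 4 :=
          pow_le_pow_left₀ hsx (mul_le_mul_of_nonneg_right hsv hx0.le) 4
        nlinarith [this]
      have step : v ^ 4 * (Real.cosh (s * x) - 1 - (s * x) ^ 2 / 2)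
          ≤ v ^ 4 * (x ^ 4 * (Real.cosh v - 1 - v ^ 2 / 2)) := by
        calc v ^ 4 * (Real.cosh (s * x) - 1 - (s * x) ^ 2 / 2)
            ≤ (s * x) ^ 4 * (Real.cosh v - 1 - v ^ 2 / 2) := hq
          _ ≤ v ^ 4 * x ^ 4 * (Real.cosh v - 1 - v ^ 2 / 2) :=
              mul_le_mul_of_nonneg_right hpow hCv
          _ = v ^ 4 * (x ^ 4 * (Real.cosh v - 1 - v ^ 2 / 2)) := by ring
      have := le_of_mul_le_mul_left step (by positivity : (0:ℝ) < v ^ 4)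
      linarith
  have hrp : (0:ℝ) < x ^ (-α - 1) := Real.rpow_pos_of_pos hx0 _
  rw [rpow_split2 hα hx0, rpow_split4 hα hx0]
  calc (Real.cosh (s * x) - 1) * x ^ (-α - 1)
      ≤ ((s * x) ^ 2 / 2 + x ^ 4 * (Real.cosh v - 1 - v ^ 2 / 2)) * x ^ (-α - 1) :=
        mul_le_mul_of_nonneg_right key hrp.le
    _ = s ^ 2 / 2 * (x ^ 2 * x ^ (-α - 1))
        + (Real.cosh v - 1 - v ^ 2 / 2) * (x ^ 4 * x ^ (-α - 1)) := by ring

lemma integrand_lower_diff {r t : ℝ} (hr : 0 ≤ r) (hrt : r ≤ t) {x : ℝ}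
    (hx : x ∈ Set.Ioo (0:ℝ) 1) :
    (t ^ 2 - r ^ 2) / 2 * x ^ (1 - α)
      ≤ (Real.cosh (t * x) - 1) * x ^ (-α - 1) - (Real.cosh (r * x) - 1) * x ^ (-α - 1) := by
  obtain ⟨hx0, hx1⟩ := hx
  have hrx : 0 ≤ r * x := mul_nonneg hr hx0.le
  have hrtx : r * x ≤ t * x := mul_le_mul_of_nonneg_right hrt hx0.le
  have hd := cosh_diff (r * x) (t * x) hrx hrtx
  have hrp : (0:ℝ) < x ^ (-α - 1) := Real.rpow_pos_of_pos hx0 _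
  rw [rpow_split2 hα hx0]
  have step : ((t * x) ^ 2 - (r * x) ^ 2) / 2 * x ^ (-α - 1)
      ≤ (Real.cosh (t * x) - Real.cosh (r * x)) * x ^ (-α - 1) :=
    mul_le_mul_of_nonneg_right hd hrp.le
  calc (t ^ 2 - r ^ 2) / 2 * (x ^ 2 * x ^ (-α - 1))
      = ((t * x) ^ 2 - (r * x) ^ 2) / 2 * x ^ (-α - 1) := by ring
    _ ≤ (Real.cosh (t * x) - Real.cosh (r * x)) * x ^ (-α - 1) := step
    _ = (Real.cosh (t * x) - 1) * x ^ (-α - 1) - (Real.cosh (r * x) - 1) * x ^ (-α - 1) := by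
        ring

lemma J_int (s : ℝ) (hs : 0 ≤ s) :
    IntegrableOn (fun x : ℝ => (Real.cosh (s * x) - 1) * x ^ (-α - 1))
      (Set.Ioo (0:ℝ) 1) := by
  have hα1 := hα.1
  have hα2 := hα.2
  have hint1 : IntegrableOn (fun x : ℝ => x ^ (1 - α)) (Set.Ioo (0:ℝ) 1) :=
    integrable_rpow_aux _ (by linarith)
  have hint3 : IntegrableOn (fun x : ℝ => x ^ (3 - α)) (Set.Ioo (0:ℝ) 1) :=
    integrable_rpow_aux _ (by linarith)
  have hbound : IntegrableOn
      (fun x : ℝ => s ^ 2 / 2 * x ^ (1 - α) + (Real.cosh s - 1 - s ^ 2 / 2) * x ^ (3 - α))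
      (Set.Ioo (0:ℝ) 1) := (hint1.const_mul _).add (hint3.const_mul _)
  apply Integrable.mono' hbound
  · apply ContinuousOn.aestronglyMeasurable _ measurableSet_Ioo
    apply ContinuousOn.mul
    · exact ((Real.continuous_cosh.comp (continuous_const.mul continuous_id)).sub
        continuous_const).continuousOn
    · intro x hx
      exact (Real.continuousAt_rpow_const x _ (Or.inl (ne_of_gt hx.1))).continuousWithinAt
  · rw [ae_restrict_iff' measurableSet_Ioo]
    apply Filter.Eventually.of_forall
    intro x hx
    have h1 : 0 ≤ Real.cosh (s * x) - 1 := by linarith [Real.one_le_cosh (s * x)]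
    have hrp : (0:ℝ) < x ^ (-α - 1) := Real.rpow_pos_of_pos hx.1 _
    rw [Real.norm_eq_abs, abs_of_nonneg (mul_nonneg h1 hrp.le)]
    exact integrand_upper hα hs le_rfl hx

lemma J_upper {s v : ℝ} (hs : 0 ≤ s) (hsv : s ≤ v) :
    J α s ≤ s ^ 2 / (2 * (2 - α)) + (Real.cosh v - 1 - v ^ 2 / 2) / (4 - α) := by
  have hα1 := hα.1
  have hα2 := hα.2
  have hint1 : IntegrableOn (fun x : ℝ => x ^ (1 - α)) (Set.Ioo (0:ℝ) 1) :=
    integrable_rpow_aux _ (by linarith)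
  have hint3 : IntegrableOn (fun x : ℝ => x ^ (3 - α)) (Set.Ioo (0:ℝ) 1) :=
    integrable_rpow_aux _ (by linarith)
  have hg : IntegrableOn
      (fun x : ℝ => s ^ 2 / 2 * x ^ (1 - α) + (Real.cosh v - 1 - v ^ 2 / 2) * x ^ (3 - α))
      (Set.Ioo (0:ℝ) 1) := (hint1.const_mul (s ^ 2 / 2)).add
        (hint3.const_mul (Real.cosh v - 1 - v ^ 2 / 2))
  have h := setIntegral_mono_on (J_int hα s hs) hg
    measurableSet_Ioo (fun x hx => integrand_upper hα hs hsv hx)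
  rw [J]
  refine le_trans h ?_
  rw [integral_add (hint1.const_mul _) (hint3.const_mul _), integral_const_mul, integral_const_mul,
    integral_rpow_Ioo _ (by linarith), integral_rpow_Ioo _ (by linarith)]
  have e1 : 1 - α + 1 = 2 - α := by ring
  have e2 : 3 - α + 1 = 4 - α := by ring
  rw [e1, e2]
  have h2ne : (2:ℝ) - α ≠ 0 := by intro h; rw [sub_eq_zero] at h; linarith
  have h4ne : (4:ℝ) - α ≠ 0 := by intro h; rw [sub_eq_zero] at h; linarith
  apply le_of_eq
  field_simp

lemma J_diff {r t : ℝ} (hr : 0 ≤ r) (hrt : r ≤ t) :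
    (t ^ 2 - r ^ 2) / (2 * (2 - α)) ≤ J α t - J α r := by
  have hα1 := hα.1
  have hα2 := hα.2
  have hint1 : IntegrableOn (fun x : ℝ => x ^ (1 - α)) (Set.Ioo (0:ℝ) 1) :=
    integrable_rpow_aux _ (by linarith)
  have ht : 0 ≤ t := hr.trans hrt
  have hg : IntegrableOn
      (fun x : ℝ => (Real.cosh (t * x) - 1) * x ^ (-α - 1)
        - (Real.cosh (r * x) - 1) * x ^ (-α - 1))
      (Set.Ioo (0:ℝ) 1) := (J_int hα t ht).sub (J_int hα r hr)
  have h := setIntegral_mono_on (hint1.const_mul ((t ^ 2 - r ^ 2) / 2)) hg measurableSet_Ioo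
    (fun x hx => integrand_lower_diff hα hr hrt hx)
  rw [integral_const_mul, integral_rpow_Ioo _ (by linarith),
    integral_sub (J_int hα t ht) (J_int hα r hr)] at h
  rw [J, J]
  have e1 : 1 - α + 1 = 2 - α := by ring
  rw [e1] at h
  have h2ne : (2:ℝ) - α ≠ 0 := by intro hh; rw [sub_eq_zero] at hh; linarith
  calc (t ^ 2 - r ^ 2) / (2 * (2 - α)) = (t ^ 2 - r ^ 2) / 2 * (1 / (2 - α)) := by
        field_simp
    _ ≤ _ := h

lemma J_zero : J α 0 = 0 := by
  rw [J]
  have : ∀ x : ℝ, (Real.cosh ((0:ℝ) * x) - 1) * x ^ (-α - 1) = 0 := by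
    intro x; simp [Real.cosh_zero]
  simp only [this, integral_zero]

lemma J_lower {s : ℝ} (hs : 0 ≤ s) : s ^ 2 / (2 * (2 - α)) ≤ J α s := by
  have h := J_diff hα (r := 0) (t := s) le_rfl hs
  rw [J_zero hα] at h
  simpa using h

end Jlemmas

/-! Numeric facts -/

lemma cosh_one_le : Real.cosh 1 ≤ 139 / 90 := by
  rw [Real.cosh_eq]
  have h1 := Real.exp_one_lt_d9
  have h2 := Real.exp_one_gt_d9
  have hpos : (0:ℝ) < Real.exp 1 := Real.exp_pos 1
  have hinv : (Real.exp 1)⁻¹ ≤ (2.7182818283:ℝ)⁻¹ := by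
    apply inv_anti₀ (by norm_num) h2.le
  have hnum : (2.7182818283:ℝ)⁻¹ ≤ 0.3678794412 := by norm_num
  rw [Real.exp_neg]
  nlinarith

lemma exp_043_le : Real.exp (43 / 100) ≤ 1.5454 := by
  have h := Real.exp_bound' (x := 43 / 100) (by norm_num) (by norm_num) (n := 4) (by norm_num)
  refine le_trans h ?_
  rw [Finset.sum_range_succ, Finset.sum_range_succ, Finset.sum_range_succ,
    Finset.sum_range_succ, Finset.sum_range_zero]
  norm_num [Nat.factorial]

lemma exp_172_ge : (4:ℝ) ≤ Real.exp (43 / 25) := by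
  have h : Real.exp (43 / 25) = Real.exp (43 / 100) ^ 4 := by
    rw [← Real.exp_nat_mul]; norm_num
  have h2 : (1:ℝ) + 43 / 100 ≤ Real.exp (43 / 100) := by
    have := Real.add_one_le_exp (43 / 100 : ℝ); linarith
  rw [h]
  calc (4:ℝ) ≤ (1 + 43 / 100) ^ 4 := by norm_num
    _ ≤ Real.exp (43 / 100) ^ 4 := pow_le_pow_left₀ (by norm_num) h2 4

lemma cosh_4325_le : Real.cosh (43 / 25) ≤ 1 + (43 / 25) ^ 2 / 2 + 1 / 2 := by
  rw [Real.cosh_eq]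
  have h1 : Real.exp (43 / 25) ≤ (1.5454:ℝ) ^ 4 := by
    have h : Real.exp (43 / 25) = Real.exp (43 / 100) ^ 4 := by
      rw [← Real.exp_nat_mul]; norm_num
    rw [h]
    exact pow_le_pow_left₀ (Real.exp_pos _).le exp_043_le 4
  have h2 : Real.exp (-(43 / 25)) ≤ 1 / 4 := by
    rw [Real.exp_neg]
    rw [inv_le_comm₀ (Real.exp_pos _) (by norm_num)]
    calc (1 / 4 : ℝ)⁻¹ = 4 := by norm_num
      _ ≤ Real.exp (43 / 25) := exp_172_ge
  have h3 : ((1.5454:ℝ)) ^ 4 ≤ 5.704 := by norm_num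
  norm_num
  nlinarith

lemma sqrt2_le : Real.sqrt 2 ≤ 1.4144 := by
  calc Real.sqrt 2 ≤ Real.sqrt (1.4144 ^ 2) := Real.sqrt_le_sqrt (by norm_num)
    _ = 1.4144 := Real.sqrt_sq (by norm_num)

lemma key_numeric : Real.exp (-2 : ℝ) ≤ 3 * (1 - Real.exp (-(641 / 2500 : ℝ))) ^ 2 := by
  have hq : Real.exp (-(641 / 2500 : ℝ)) ≤ (7500 / 8141 : ℝ) ^ 3 := by
    have hcube : ((8141 / 7500 : ℝ)) ^ 3 ≤ Real.exp (641 / 2500) := by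
      have h1 : (641 / 7500 : ℝ) + 1 ≤ Real.exp (641 / 7500) := Real.add_one_le_exp _
      have h2 : ((8141 / 7500 : ℝ)) ^ 3 ≤ Real.exp (641 / 7500) ^ 3 := by
        apply pow_le_pow_left₀ (by norm_num)
        linarith
      have h3 : Real.exp (641 / 7500 : ℝ) ^ 3 = Real.exp (641 / 2500) := by
        rw [← Real.exp_nat_mul]; norm_num
      linarith [h3 ▸ h2]
    rw [Real.exp_neg]
    rw [inv_le_comm₀ (Real.exp_pos _) (by positivity)]
    calc ((7500 / 8141 : ℝ) ^ 3)⁻¹ = (8141 / 7500 : ℝ) ^ 3 := by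
          rw [← inv_pow]; norm_num
      _ ≤ Real.exp (641 / 2500) := hcube
  have hql : (0:ℝ) < Real.exp (-(641 / 2500 : ℝ)) := Real.exp_pos _
  have h1mq : (1 : ℝ) - (7500 / 8141 : ℝ) ^ 3 ≤ 1 - Real.exp (-(641 / 2500 : ℝ)) := by linarith
  have hnn : (0:ℝ) ≤ 1 - (7500 / 8141 : ℝ) ^ 3 := by norm_num
  have hsq : ((1 : ℝ) - (7500 / 8141 : ℝ) ^ 3) ^ 2 ≤ (1 - Real.exp (-(641 / 2500 : ℝ))) ^ 2 :=
    pow_le_pow_left₀ hnn h1mq 2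
  have he2 : Real.exp (-2 : ℝ) ≤ ((2.7182818283 : ℝ) ^ 2)⁻¹ := by
    rw [Real.exp_neg]
    apply inv_anti₀ (by norm_num)
    have h : Real.exp (2:ℝ) = Real.exp 1 ^ 2 := by
      rw [← Real.exp_nat_mul]; norm_num
    rw [h]
    exact pow_le_pow_left₀ (by norm_num) Real.exp_one_gt_d9.le 2
  have hfin : ((2.7182818283 : ℝ) ^ 2)⁻¹ ≤ 3 * ((1 : ℝ) - (7500 / 8141 : ℝ) ^ 3) ^ 2 := by
    norm_num
  nlinarith [hsq]

end GTSJhelper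

open GTSJhelper

set_option maxHeartbeats 1600000 in
/-- Fix `α ∈ (1,2)` and let `X̃₁` be a random variable with moment
generating function `E[exp(t X̃₁)] = exp(2∫₀¹ (cosh(tx) - 1) x^{-α-1} dx)`. Then for
`0 ≤ y ≤ 2/(2-α)` one has `P(X̃₁ ≥ y) ≤ e^{2/45} e^{-(2-α)y²/4}`, and for
`y ∈ [2/√(2-α), 2/(2-α)]` one has `P(X̃₁ ≥ (√2/4)y) ≥ (1/3) e^{-(2-α)y²}`. -/
theorem gaussian_tail_small_jumps_symmetric
    {Ω : Type*} [MeasurableSpace Ω] (μ : Measure Ω) [IsProbabilityMeasure μ]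
    (α : ℝ) (hα : α ∈ Set.Ioo (1:ℝ) 2)
    (X : Ω → ℝ) (hXmeas : Measurable X)
    (hXint : ∀ t : ℝ, Integrable (fun ω => Real.exp (t * X ω)) μ)
    (hmgf : ∀ t : ℝ, ∫ ω, Real.exp (t * X ω) ∂μ
      = Real.exp (2 * ∫ x in Set.Ioo (0:ℝ) 1, (Real.cosh (t*x) - 1) * x ^ (-α-1))) :
    (∀ y : ℝ, 0 ≤ y → y ≤ 2/(2-α) →
      (μ {ω | y ≤ X ω}).toReal
        ≤ Real.exp (2/45) * Real.exp (-(1/4) * (2-α) * y^2))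
    ∧ (∀ y ∈ Set.Icc (2 / Real.sqrt (2-α)) (2/(2-α)),
      (1/3) * Real.exp (-(2-α) * y^2)
        ≤ (μ {ω | (Real.sqrt 2 / 4) * y ≤ X ω}).toReal) := by
  obtain ⟨hα1, hα2⟩ := hα
  have h2α : (0:ℝ) < 2 - α := by linarith
  have hαIoo : α ∈ Set.Ioo (1:ℝ) 2 := ⟨hα1, hα2⟩
  have hmgfJ : ∀ t : ℝ, ∫ ω, Real.exp (t * X ω) ∂μ = Real.exp (2 * J α t) := hmgf
  constructor
  · -- upper tail
    intro y hy0 hyu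
    set t := (2 - α) * y / 2 with ht_def
    have ht0 : 0 ≤ t := by
      rw [ht_def]; positivity
    have hzy : (2 - α) * y ≤ 2 := by
      rw [le_div_iff₀ h2α] at hyu; linarith
    have ht1 : t ≤ 1 := by rw [ht_def]; linarith
    have hch := measure_ge_le_exp_mul_mgf (μ := μ) (X := X) y ht0 (hXint t)
    have hmg : mgf X μ t = Real.exp (2 * J α t) := hmgfJ t
    rw [hmg] at hch
    refine le_trans hch ?_
    rw [← Real.exp_add, ← Real.exp_add]
    apply Real.exp_le_exp.mpr
    -- need : -t*y + 2 * J α t ≤ 2/45 + (-(1/4)*(2-α)*y^2)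
    have hJu := J_upper hαIoo (s := t) (v := 1) ht0 ht1
    have hC1 : Real.cosh 1 - 1 - 1 ^ 2 / 2 ≤ 2 / 45 := by
      have := cosh_one_le; norm_num; linarith
    have hC0 : 0 ≤ Real.cosh 1 - 1 - 1 ^ 2 / 2 := cosh_quad_lower 1 (by norm_num)
    have hdiv : (Real.cosh 1 - 1 - 1 ^ 2 / 2) / (4 - α) ≤ (Real.cosh 1 - 1 - 1 ^ 2 / 2) / 2 := by
      apply div_le_div_of_nonneg_left hC0 (by norm_num) (by linarith)
    have ht2 : t ^ 2 / (2 * (2 - α)) = (2 - α) * y ^ 2 / 8 := by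
      rw [ht_def]; field_simp; ring
    have hty : t * y = (2 - α) * y ^ 2 / 2 := by rw [ht_def]; ring
    have : J α t ≤ (2 - α) * y ^ 2 / 8 + 1 / 45 := by
      rw [ht2] at hJu
      nlinarith
    nlinarith
  · -- lower tail
    rintro y ⟨hyl, hyu⟩
    have hsqpos : 0 < Real.sqrt (2 - α) := Real.sqrt_pos.mpr h2α
    have hsq1 : Real.sqrt (2 - α) ≤ 1 := by
      rw [show (1:ℝ) = Real.sqrt 1 from (Real.sqrt_one).symm]
      exact Real.sqrt_le_sqrt (by linarith)
    have hy2 : (2:ℝ) ≤ y := by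
      refine le_trans ?_ hyl
      rw [le_div_iff₀ hsqpos]; nlinarith
    have hy0 : (0:ℝ) < y := by linarith
    set z := (2 - α) * y ^ 2 with hz_def
    have hz4 : (4:ℝ) ≤ z := by
      have h1 : (2:ℝ) / Real.sqrt (2 - α) ≤ y := hyl
      have h2 : ((2:ℝ) / Real.sqrt (2 - α)) ^ 2 ≤ y ^ 2 :=
        pow_le_pow_left₀ (by positivity) h1 2
      have h3 : ((2:ℝ) / Real.sqrt (2 - α)) ^ 2 = 4 / (2 - α) := by
        rw [div_pow, Real.sq_sqrt h2α.le]; norm_num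
      rw [h3] at h2
      rw [hz_def]
      calc (4:ℝ) = (2 - α) * (4 / (2 - α)) := by field_simp
        _ ≤ (2 - α) * y ^ 2 := mul_le_mul_of_nonneg_left h2 h2α.le
    have hzy : (2 - α) * y ≤ 2 := by
      rw [le_div_iff₀ h2α] at hyu; linarith
    have hzpos : (0:ℝ) < z := by linarith
    set t := (43 / 100 : ℝ) * ((2 - α) * y) with ht_def
    set s := (1 / 4 : ℝ) * ((2 - α) * y) with hs_def
    set r := (9 / 50 : ℝ) * ((2 - α) * y) with hr_def
    have hw0 : (0:ℝ) ≤ (2 - α) * y := by positivity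
    have ht0 : 0 ≤ t := by rw [ht_def]; positivity
    have hs0 : 0 ≤ s := by rw [hs_def]; positivity
    have hr0 : 0 ≤ r := by rw [hr_def]; positivity
    have hrt : r ≤ t := by rw [hr_def, ht_def]; nlinarith
    have htrs : t = r + s := by rw [ht_def, hr_def, hs_def]; ring
    have h2t : 2 * t ≤ 43 / 25 := by rw [ht_def]; nlinarith
    set a := Real.sqrt 2 / 4 * y with ha_def
    set A := {ω | a ≤ X ω} with hA_def
    have hA : MeasurableSet A := measurableSet_le measurable_const hXmeas
    set q : ℝ := Real.exp (-(641 / 2500 : ℝ)) with hq_def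
    have hq1 : q < 1 := by rw [hq_def]; exact Real.exp_lt_one_iff.mpr (by norm_num)
    have hq0 : 0 < q := Real.exp_pos _
    set D0 : ℝ := (1 - q) * Real.exp (2 * J α t) with hD0_def
    have hD0pos : 0 < D0 := mul_pos (by linarith) (Real.exp_pos _)
    set M2 : ℝ := Real.exp ((7396 / 10000 : ℝ) * z + 1 / 2) with hM2_def
    have hM2pos : 0 < M2 := Real.exp_pos _
    set c : ℝ := M2 / D0 with hc_def
    have hc : 0 < c := div_pos hM2pos hD0pos
    -- Step A : lower bound for the integral over A
    have hsplit := integral_add_compl hA (hXint t)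
    have hAc_le : ∫ ω in Aᶜ, Real.exp (t * X ω) ∂μ
        ≤ Real.exp (s * a) * Real.exp (2 * J α r) := by
      have step1 : ∫ ω in Aᶜ, Real.exp (t * X ω) ∂μ
          ≤ ∫ ω in Aᶜ, Real.exp (s * a) * Real.exp (r * X ω) ∂μ := by
        apply setIntegral_mono_on ((hXint t).integrableOn)
          (((hXint r).const_mul _).integrableOn) hA.compl
        intro ω hω
        have hωa : X ω < a := by
          have := hω
          simp only [hA_def, Set.mem_compl_iff, Set.mem_setOf_eq, not_le] at this
          exact this
        rw [← Real.exp_add]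
        apply Real.exp_le_exp.mpr
        have he : t * X ω = s * X ω + r * X ω := by rw [htrs]; ring
        rw [he]
        have : s * X ω ≤ s * a := mul_le_mul_of_nonneg_left hωa.le hs0
        linarith
      have step2 : ∫ ω in Aᶜ, Real.exp (s * a) * Real.exp (r * X ω) ∂μ
          = Real.exp (s * a) * ∫ ω in Aᶜ, Real.exp (r * X ω) ∂μ := by
        exact integral_const_mul _ _
      have step3 : ∫ ω in Aᶜ, Real.exp (r * X ω) ∂μ ≤ ∫ ω, Real.exp (r * X ω) ∂μ :=
        setIntegral_le_integral (hXint r) (Filter.Eventually.of_forall fun ω => (Real.exp_pos _).le)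
      calc ∫ ω in Aᶜ, Real.exp (t * X ω) ∂μ
          ≤ Real.exp (s * a) * ∫ ω in Aᶜ, Real.exp (r * X ω) ∂μ := by rw [← step2]; exact step1
        _ ≤ Real.exp (s * a) * ∫ ω, Real.exp (r * X ω) ∂μ :=
            mul_le_mul_of_nonneg_left step3 (Real.exp_pos _).le
        _ = Real.exp (s * a) * Real.exp (2 * J α r) := by rw [hmgfJ r]
    have hIA_ge : Real.exp (2 * J α t) - Real.exp (s * a) * Real.exp (2 * J α r)
        ≤ ∫ ω in A, Real.exp (t * X ω) ∂μ := by
      have h := hmgfJ t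
      linarith [hsplit, hAc_le, h]
    -- D0 lower-bounds the truncated mgf
    have hD_ge : D0 ≤ Real.exp (2 * J α t) - Real.exp (s * a) * Real.exp (2 * J α r) := by
      have hdiff := J_diff hαIoo hr0 hrt
      have he : (t ^ 2 - r ^ 2) / (2 * (2 - α)) = 61 / 800 * z := by
        rw [ht_def, hr_def, hz_def]; field_simp; ring
      rw [he] at hdiff
      have hsa : s * a ≤ 884 / 10000 * z := by
        rw [hs_def, ha_def, hz_def]
        have h := sqrt2_le
        have hzq : (0:ℝ) ≤ (2 - α) * y ^ 2 / 16 := by positivity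
        have h2 := mul_le_mul_of_nonneg_right h hzq
        nlinarith [h2]
      have hexp : s * a + 2 * J α r ≤ 2 * J α t + (-(641 / 2500 : ℝ)) := by
        have h1 : s * a + 2 * J α r ≤ 2 * J α t - 641 / 10000 * z := by nlinarith
        nlinarith
      have h2 : Real.exp (s * a) * Real.exp (2 * J α r)
          ≤ Real.exp (2 * J α t) * q := by
        rw [← Real.exp_add, hq_def, ← Real.exp_add]
        exact Real.exp_le_exp.mpr hexp
      rw [hD0_def]
      nlinarith [Real.exp_pos (2 * J α t)]
    -- upper bound for mgf(2t)
    have hM_le : Real.exp (2 * J α (2 * t)) ≤ M2 := by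
      have hJu := J_upper hαIoo (s := 2 * t) (v := 43 / 25) (by linarith) h2t
      have hC := cosh_4325_le
      have hC0 : 0 ≤ Real.cosh (43 / 25) - 1 - (43 / 25) ^ 2 / 2 :=
        cosh_quad_lower _ (by norm_num)
      have hC12 : Real.cosh (43 / 25) - 1 - (43 / 25) ^ 2 / 2 ≤ 1 / 2 := by linarith
      have hdiv : (Real.cosh (43 / 25) - 1 - (43 / 25) ^ 2 / 2) / (4 - α)
          ≤ (Real.cosh (43 / 25) - 1 - (43 / 25) ^ 2 / 2) / 2 :=
        div_le_div_of_nonneg_left hC0 (by norm_num) (by linarith)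
      have ht2 : (2 * t) ^ 2 / (2 * (2 - α)) = 7396 / 20000 * z := by
        rw [ht_def, hz_def]; field_simp; ring
      rw [ht2] at hJu
      rw [hM2_def]
      apply Real.exp_le_exp.mpr
      nlinarith
    -- AM-GM step
    have hIA_le : ∫ ω in A, Real.exp (t * X ω) ∂μ
        ≤ c / 2 * (μ A).toReal + 1 / (2 * c) * Real.exp (2 * J α (2 * t)) := by
      have pt : ∀ ω : Ω, Real.exp (t * X ω)
          ≤ c / 2 + 1 / (2 * c) * Real.exp ((2 * t) * X ω) := by
        intro ω
        have h1 : Real.exp ((2 * t) * X ω) = Real.exp (t * X ω) * Real.exp (t * X ω) := by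
          rw [← Real.exp_add]; ring_nf
        set w := Real.exp (t * X ω) with hw_def
        have hw : 0 < w := Real.exp_pos _
        rw [h1]
        have key : c / 2 + 1 / (2 * c) * (w * w) - w = (w - c) ^ 2 / (2 * c) := by
          field_simp; ring
        nlinarith [sq_nonneg (w - c), div_nonneg (sq_nonneg (w - c)) (by linarith : (0:ℝ) ≤ 2 * c)]
      have int1 : IntegrableOn (fun ω => c / 2 + 1 / (2 * c) * Real.exp ((2 * t) * X ω)) A μ :=
        ((integrable_const _).add ((hXint (2 * t)).const_mul _)).integrableOn
      have step1 : ∫ ω in A, Real.exp (t * X ω) ∂μ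
          ≤ ∫ ω in A, (c / 2 + 1 / (2 * c) * Real.exp ((2 * t) * X ω)) ∂μ :=
        setIntegral_mono_on ((hXint t).integrableOn) int1 hA (fun ω _ => pt ω)
      have step2 : ∫ ω in A, (c / 2 + 1 / (2 * c) * Real.exp ((2 * t) * X ω)) ∂μ
          = c / 2 * (μ A).toReal + 1 / (2 * c) * ∫ ω in A, Real.exp ((2 * t) * X ω) ∂μ := by
        rw [integral_add (integrableOn_const (C := c / 2) (s := A) (μ := μ) (measure_ne_top _ _))
          (((hXint (2 * t)).const_mul _).integrableOn), setIntegral_const,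
          integral_const_mul, smul_eq_mul, measureReal_def]
        ring
      have step3 : ∫ ω in A, Real.exp ((2 * t) * X ω) ∂μ
          ≤ Real.exp (2 * J α (2 * t)) := by
        rw [← hmgfJ (2 * t)]
        exact setIntegral_le_integral (hXint (2 * t))
          (Filter.Eventually.of_forall fun ω => (Real.exp_pos _).le)
      calc ∫ ω in A, Real.exp (t * X ω) ∂μ
          ≤ c / 2 * (μ A).toReal + 1 / (2 * c) * ∫ ω in A, Real.exp ((2 * t) * X ω) ∂μ := by
            rw [← step2]; exact step1
        _ ≤ c / 2 * (μ A).toReal + 1 / (2 * c) * Real.exp (2 * J α (2 * t)) := by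
            have h0 : (0:ℝ) ≤ 1 / (2 * c) := by positivity
            nlinarith [step3]
    -- combine : D0 ≤ c/2 * P + D0/2, hence P ≥ D0/c = D0²/M2
    have hP : D0 ^ 2 / M2 ≤ (μ A).toReal := by
      have h1 : D0 ≤ c / 2 * (μ A).toReal + 1 / (2 * c) * M2 := by
        have := le_trans hD_ge hIA_ge
        have h2 : 1 / (2 * c) * Real.exp (2 * J α (2 * t)) ≤ 1 / (2 * c) * M2 := by
          apply mul_le_mul_of_nonneg_left hM_le (by positivity)
        linarith [hIA_le]
      have hMc : 1 / (2 * c) * M2 = D0 / 2 := by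
        have hD0ne : D0 ≠ 0 := ne_of_gt hD0pos
        have hM2ne : M2 ≠ 0 := ne_of_gt hM2pos
        rw [hc_def]
        field_simp
      rw [hMc] at h1
      have h2 : D0 / 2 ≤ c / 2 * (μ A).toReal := by linarith
      have h3 : D0 / c ≤ (μ A).toReal := by
        rw [div_le_iff₀ hc]
        nlinarith
      have h4 : D0 ^ 2 / M2 = D0 / c := by
        rw [hc_def]; field_simp
      linarith [h4 ▸ h3]
    -- final numeric comparison
    refine le_trans ?_ hP
    have hJt : (3698 / 10000 : ℝ) * z ≤ 4 * J α t := by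
      have h := J_lower hαIoo (s := t) ht0
      have he : t ^ 2 / (2 * (2 - α)) = 3698 / 40000 * z := by
        rw [ht_def, hz_def]; field_simp; ring
      rw [he] at h
      linarith
    have hsq : Real.exp (2 * J α t) ^ 2 = Real.exp (4 * J α t) := by
      rw [sq, ← Real.exp_add]
      congr 1
      ring
    have hexp_eq : D0 ^ 2 / M2
        = (1 - q) ^ 2 * Real.exp (4 * J α t - ((7396 / 10000 : ℝ) * z + 1 / 2)) := by
      rw [hD0_def, hM2_def, Real.exp_sub, mul_pow, hsq, mul_div_assoc]
    rw [hexp_eq]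
    have hlow : Real.exp (-(3698 / 10000 : ℝ) * z - 1 / 2)
        ≤ Real.exp (4 * J α t - ((7396 / 10000 : ℝ) * z + 1 / 2)) := by
      apply Real.exp_le_exp.mpr
      linarith
    have hkey : (1 / 3 : ℝ) * Real.exp (-(2 - α) * y ^ 2)
        ≤ (1 - q) ^ 2 * Real.exp (-(3698 / 10000 : ℝ) * z - 1 / 2) := by
      have hz_eq : -(2 - α) * y ^ 2 = -z := by rw [hz_def]; ring
      rw [hz_eq]
      have hsplit2 : Real.exp (-z)
          = Real.exp (1 / 2 - (6302 / 10000 : ℝ) * z)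
            * Real.exp (-(3698 / 10000 : ℝ) * z - 1 / 2) := by
        rw [← Real.exp_add]; ring_nf
      rw [hsplit2]
      have hstep : Real.exp (1 / 2 - (6302 / 10000 : ℝ) * z) ≤ 3 * (1 - q) ^ 2 := by
        have h1 : Real.exp (1 / 2 - (6302 / 10000 : ℝ) * z) ≤ Real.exp (-2 : ℝ) := by
          apply Real.exp_le_exp.mpr; nlinarith
        exact le_trans h1 (hq_def ▸ key_numeric)
      have hep : (0:ℝ) < Real.exp (-(3698 / 10000 : ℝ) * z - 1 / 2) := Real.exp_pos _
      have hmul := mul_le_mul_of_nonneg_right hstep hep.le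
      linarith [hmul]
    refine le_trans hkey ?_
    have h1mq : (0:ℝ) ≤ (1 - q) ^ 2 := sq_nonneg _
    exact mul_le_mul_of_nonneg_left hlow h1mq
end
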